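/- arXiv:2409.15351 — 4 statements merged into one kernel-verified Lean document; each statement's English description precedes it below -/
import Mathlib

section
/- Let p : E → X be a covering map, e₀ ∈ E, and x₀ = p(e₀). Let Y be a path-connected and locally path-connected topological space with basepoint y₀, and let f : Y → X be continuous with f(y₀) = x₀. Then there exists a continuous map g : Y → E with p ∘ g = f and g(y₀) = e₀ if and only if the image of the induced homomorphism f_* : π₁(Y, y₀) → π₁(X, x₀) is contained in the image of the induced homomorphism p_* : π₁(E, e₀) → π₁(X, x₀). -/
open CategoryTheory

/-- The group homomorphism `f⁎ : π₁(Y, y₀) →* π₁(X, x₀)` induced on fundamental groups by a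
continuous map `f : Y → X` with `f y₀ = x₀`. -/
noncomputable def FundamentalGroup.inducedHom {Y X : Type u} [TopologicalSpace Y]
    [TopologicalSpace X] (f : C(Y, X)) (y₀ : Y) (x₀ : X) (hf : f y₀ = x₀) :
    FundamentalGroup Y y₀ →* FundamentalGroup X x₀ :=
  let F : TopCat.of Y ⟶ TopCat.of X := TopCat.ofHom f
  let Φ : FundamentalGroupoid (TopCat.of Y) ⥤ FundamentalGroupoid (TopCat.of X) :=
    FundamentalGroupoid.fundamentalGroupoidFunctor.map F
  have hobj : Φ.obj ⟨y₀⟩ = (⟨x₀⟩ : FundamentalGroupoid (TopCat.of X)) := by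
    subst hf; rfl
  ((CategoryTheory.eqToIso hobj).conj.toMonoidHom).comp
    (CategoryTheory.Functor.mapEnd ⟨y₀⟩ Φ)

/-- The element of the fundamental group `π₁(X, x)` determined by a loop based at `x`. -/
noncomputable def FundamentalGroup.fromLoop {X : Type u} [TopologicalSpace X] {x : X}
    (α : Path x x) : FundamentalGroup X x :=
  FundamentalGroup.fromPath (X := TopCat.of X) (Quotient.mk (Path.Homotopic.setoid x x) α)

open Set Topology Metric unitInterval

universe u

noncomputable section

namespace LiftCrit

variable {E X : Type u} [TopologicalSpace E] [TopologicalSpace X] {p : E → X}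

theorem continuousOn_union_closed {α β : Type*} [TopologicalSpace α] [TopologicalSpace β]
    {f : α → β} {s t : Set α} (hs : IsClosed s) (ht : IsClosed t)
    (hfs : ContinuousOn f s) (hft : ContinuousOn f t) : ContinuousOn f (s ∪ t) := by
  intro x hx
  rw [ContinuousWithinAt, nhdsWithin_union]
  have key : ∀ u : Set α, IsClosed u → ContinuousOn f u →
      Filter.Tendsto f (𝓝[u] x) (𝓝 (f x)) := by
    intro u hu hfu
    by_cases hxu : x ∈ u
    · exact hfu x hxu
    · have : 𝓝[u] x = ⊥ := by
        rw [← Filter.not_neBot, ← mem_closure_iff_nhdsWithin_neBot, hu.closure_eq]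
        exact hxu
      rw [this]
      exact Filter.tendsto_bot
  exact Filter.Tendsto.sup (key s hs hfs) (key t ht hft)

variable {F : Type*} [TopologicalSpace F]

/-- The section of `p` over `T.baseSet` through the sheet `i`. -/
def sec (T : Bundle.Trivialization F p) (i : F) (x : X) : E := T.toOpenPartialHomeomorph.symm (x, i)

theorem sec_proj (T : Bundle.Trivialization F p) (i : F) {x : X} (hx : x ∈ T.baseSet) :
    p (sec T i x) = x :=
  T.proj_symm_apply' hx

theorem continuousOn_sec (T : Bundle.Trivialization F p) (i : F) :
    ContinuousOn (sec T i) T.baseSet := by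
  have h := T.toOpenPartialHomeomorph.continuousOn_symm
  refine h.comp (Continuous.continuousOn (by continuity)) fun x hx => ?_
  rw [T.target_eq]
  exact ⟨hx, trivial⟩

theorem sec_self (T : Bundle.Trivialization F p) {z : E} (hz : z ∈ T.source) :
    sec T (T z).2 (p z) = z :=
  T.symm_apply_mk_proj hz

/-- A continuous partial lift over a preconnected set stays in one sheet. -/
theorem eqOn_sec [DiscreteTopology F] (T : Bundle.Trivialization F p) {A : Type*} [TopologicalSpace A]
    {g : A → E} {h : A → X} {s : Set A} (hg : ContinuousOn g s)
    (hpg : ∀ z ∈ s, p (g z) = h z) (hs : _root_.IsPreconnected s)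
    (hU : ∀ z ∈ s, h z ∈ T.baseSet) {a : A} (ha : a ∈ s) :
    ∀ z ∈ s, g z = sec T (T (g a)).2 (h z) := by
  intro z hz
  have hsrc : ∀ w ∈ s, g w ∈ T.source := fun w hw =>
    T.mem_source.2 (by rw [hpg w hw]; exact hU w hw)
  have hcont : ContinuousOn (fun w => (T (g w)).2) s :=
    (continuous_snd.comp_continuousOn ((T.continuousOn_toFun.comp hg hsrc)))
  have hconst : (T (g z)).2 = (T (g a)).2 := hs.constant hcont hz ha
  have : sec T (T (g z)).2 (p (g z)) = g z := sec_self T (hsrc z hz)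
  rw [← hconst, ← hpg z hz, this]


/-- A closed box inside the unit square, given by real bounds. -/
def Box (a b c d : ℝ) : Set (I × I) :=
  {z : I × I | a ≤ (z.1 : ℝ) ∧ (z.1 : ℝ) ≤ b ∧ c ≤ (z.2 : ℝ) ∧ (z.2 : ℝ) ≤ d}

theorem Box_eq_preimage (a b c d : ℝ) :
    Box a b c d
      = (fun z : I × I => ((z.1 : ℝ), (z.2 : ℝ))) ⁻¹' (Icc a b ×ˢ Icc c d) := by
  ext z
  simp only [Box, mem_setOf_eq, mem_preimage, mem_prod, mem_Icc]
  tauto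

theorem isClosed_Box (a b c d : ℝ) : IsClosed (Box a b c d) := by
  rw [Box_eq_preimage]
  exact (isClosed_Icc.prod isClosed_Icc).preimage
    ((continuous_subtype_val.comp continuous_fst).prodMk
      (continuous_subtype_val.comp continuous_snd))

theorem isPreconnected_Box (a b c d : ℝ) : _root_.IsPreconnected (Box a b c d) := by
  have hemb : Topology.IsInducing fun z : I × I => ((z.1 : ℝ), (z.2 : ℝ)) :=
    Topology.IsInducing.subtypeVal.prodMap Topology.IsInducing.subtypeVal
  rw [← hemb.isPreconnected_image]
  have himg : (fun z : I × I => ((z.1 : ℝ), (z.2 : ℝ))) '' Box a b c d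
      = (Icc a b ×ˢ Icc c d) ∩ (Icc (0:ℝ) 1 ×ˢ Icc (0:ℝ) 1) := by
    ext w
    constructor
    · rintro ⟨z, hz, rfl⟩
      exact ⟨⟨⟨hz.1, hz.2.1⟩, hz.2.2⟩, ⟨z.1.2, z.2.2⟩⟩
    · rintro ⟨⟨⟨h1, h2⟩, h3, h4⟩, ⟨h5, h6⟩⟩
      exact ⟨(⟨w.1, h5⟩, ⟨w.2, h6⟩), ⟨h1, h2, h3, h4⟩, rfl⟩
  rw [himg]
  exact (((convex_Icc a b).prod (convex_Icc c d)).inter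
    ((convex_Icc 0 1).prod (convex_Icc 0 1))).isPreconnected


/-! ### The grid -/

/-- The `(i,j)` small square of the `n × n` grid on the unit square. -/
def Sq (n i j : ℕ) : Set (I × I) :=
  Box ((i : ℝ)/n) ((i+1 : ℕ)/n) ((j : ℝ)/n) ((j+1 : ℕ)/n)

/-- The staircase region: the union of the first `m` squares (row by row). -/
def Rg (n m : ℕ) : Set (I × I) := ⋃ k < m, Sq n (k % n) (k / n)

theorem isClosed_Sq (n i j : ℕ) : IsClosed (Sq n i j) := isClosed_Box _ _ _ _

theorem isClosed_Rg (n m : ℕ) : IsClosed (Rg n m) :=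
  (Set.finite_Iio (m : ℕ)).isClosed_biUnion fun k _ => isClosed_Sq n (k % n) (k / n)

theorem Rg_succ (n m : ℕ) : Rg n (m + 1) = Rg n m ∪ Sq n (m % n) (m / n) :=
  Set.biUnion_lt_succ _ _

theorem Rg_mono (n : ℕ) {m m' : ℕ} (h : m ≤ m') : Rg n m ⊆ Rg n m' :=
  Set.biUnion_subset_biUnion_left fun _ hk => lt_of_lt_of_le hk h

theorem mem_Rg {n m k : ℕ} (hk : k < m) {z : I × I} (hz : z ∈ Sq n (k % n) (k / n)) :
    z ∈ Rg n m :=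
  Set.mem_iUnion₂.2 ⟨k, hk, hz⟩

theorem grid_idx {n i j : ℕ} (hi : i < n) : (i + n * j) % n = i ∧ (i + n * j) / n = j := by
  have hn : 0 < n := lt_of_le_of_lt (Nat.zero_le i) hi
  exact ⟨by rw [Nat.add_mul_mod_self_left, Nat.mod_eq_of_lt hi],
    by rw [Nat.add_mul_div_left _ _ hn, Nat.div_eq_of_lt hi, Nat.zero_add]⟩

theorem exists_grid_idx {n : ℕ} (hn : 0 < n) (x : I) :
    ∃ i < n, (i : ℝ)/n ≤ x ∧ (x : ℝ) ≤ (i + 1 : ℕ)/n := by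
  have hn' : (0 : ℝ) < n := Nat.cast_pos.2 hn
  set i := min (n - 1) ⌊(x : ℝ) * n⌋₊ with hi
  have hix : (i : ℝ) ≤ (x : ℝ) * n := by
    calc (i : ℝ) ≤ (⌊(x : ℝ) * n⌋₊ : ℝ) := Nat.cast_le.2 (min_le_right _ _)
    _ ≤ (x : ℝ) * n := Nat.floor_le (mul_nonneg x.2.1 hn'.le)
  refine ⟨i, lt_of_le_of_lt (min_le_left _ _) (Nat.sub_lt hn one_pos), ?_, ?_⟩
  · rw [div_le_iff₀ hn']
    exact hix
  · rw [le_div_iff₀ hn']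
    by_cases hc : ⌊(x : ℝ) * n⌋₊ ≤ n - 1
    · have : i = ⌊(x : ℝ) * n⌋₊ := min_eq_right hc
      rw [this]
      push_cast
      exact (Nat.lt_floor_add_one _).le
    · have h1 : i = n - 1 := min_eq_left (le_of_not_ge hc)
      have h2 : i + 1 = n := by rw [h1]; exact Nat.succ_pred_eq_of_pos hn
      rw [h2]
      calc (x : ℝ) * n ≤ 1 * n := by
            exact mul_le_mul_of_nonneg_right x.2.2 hn'.le
      _ = (n : ℝ) := one_mul _

theorem Rg_eq_univ {n : ℕ} (hn : 0 < n) : Rg n (n * n) = Set.univ := by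
  refine Set.eq_univ_of_forall fun z => ?_
  obtain ⟨i, hi, hi1, hi2⟩ := exists_grid_idx hn z.1
  obtain ⟨j, hj, hj1, hj2⟩ := exists_grid_idx hn z.2
  have hk : i + n * j < n * n := by
    calc i + n * j < n + n * j := by omega
    _ = n * (j + 1) := by ring
    _ ≤ n * n := Nat.mul_le_mul_left n hj
  refine mem_Rg hk ?_
  rw [(grid_idx hi).1, (grid_idx hi).2]
  exact ⟨hi1, hi2, hj1, hj2⟩



/-! ### Lebesgue number setup -/

variable {E X : Type u} [TopologicalSpace E] [TopologicalSpace X] {p : E → X}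

theorem exists_grid (hp : IsCoveringMap p) (H : C(I × I, X))
    (hne : ∀ z : I × I, Nonempty (p ⁻¹' {H z})) :
    ∃ n : ℕ, 0 < n ∧ ∀ i j : ℕ, i < n → j < n →
      ∃ x : X, ∃ _ : Nonempty (p ⁻¹' {x}),
        Set.MapsTo H (Sq n i j) ((hp x).toTrivialization).baseSet := by
  have hcov : (Set.univ : Set (I × I)) ⊆
      ⋃ z : I × I, H ⁻¹' (haveI := hne z; (hp (H z)).toTrivialization).baseSet := fun z _ =>
    Set.mem_iUnion.2 ⟨z, haveI := hne z; (hp (H z)).mem_toTrivialization_baseSet⟩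
  obtain ⟨δ, hδ, hball⟩ := lebesgue_number_lemma_of_metric isCompact_univ
    (fun z => haveI := hne z;
      ((hp (H z)).toTrivialization).open_baseSet.preimage H.continuous) hcov
  obtain ⟨n, hδn⟩ := exists_nat_one_div_lt hδ
  refine ⟨n + 1, Nat.succ_pos n, fun i j hi hj => ?_⟩
  set N : ℕ := n + 1
  have hN : (0 : ℝ) < N := by positivity
  have hiN : (i : ℝ)/N ∈ I := ⟨by positivity, by
    rw [div_le_one hN]; exact_mod_cast hi.le⟩
  have hjN : (j : ℝ)/N ∈ I := ⟨by positivity, by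
    rw [div_le_one hN]; exact_mod_cast hj.le⟩
  obtain ⟨x, hx⟩ := hball (⟨(i : ℝ)/N, hiN⟩, ⟨(j : ℝ)/N, hjN⟩) trivial
  refine ⟨H x, hne x, fun z hz => hx ?_⟩
  obtain ⟨h1, h2, h3, h4⟩ := hz
  have hd : ∀ (a : I) (k : ℕ) (hk : (k : ℝ)/N ∈ I), (k : ℝ)/N ≤ a → (a : ℝ) ≤ (k + 1 : ℕ)/N →
      dist a (⟨(k : ℝ)/N, hk⟩ : I) < δ := by
    intro a k hk hka hak
    rw [Subtype.dist_eq, Real.dist_eq, abs_of_nonneg (by exact sub_nonneg.2 hka)]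
    have : (a : ℝ) - k/N ≤ 1/N := by
      rw [sub_le_iff_le_add]
      calc (a : ℝ) ≤ (k + 1 : ℕ)/N := hak
      _ = 1/N + k/N := by push_cast; ring
      _ = 1/N + (k : ℝ)/N := rfl
    calc (a : ℝ) - k/N ≤ 1/N := this
    _ = 1/((n : ℝ) + 1) := by norm_num [N]
    _ < δ := hδn
  rw [mem_ball, Prod.dist_eq]
  exact max_lt (hd z.1 i hiN h1 h2) (hd z.2 j hjN h3 h4)

theorem div_mono_nat {n : ℕ} (hn : (0:ℝ) < n) {a b : ℝ} (h : a ≤ b) :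
    a / n ≤ b / n := (div_le_div_iff_of_pos_right hn).2 h

/-! ### Extension step for the square lifting -/

theorem extend_step {F : Type*} [TopologicalSpace F] [DiscreteTopology F]
    {n m i j : ℕ} (T : Bundle.Trivialization F p)
    (H : C(I × I, X)) (hT : Set.MapsTo H (Sq n i j) T.baseSet)
    {W : Set (I × I)} (hW1 : W ⊆ Rg n m) (hW2 : W ⊆ Sq n i j)
    (hW3 : Sq n i j ∩ Rg n m ⊆ W) (hW4 : _root_.IsPreconnected W) {a : I × I} (ha : a ∈ W)
    {G : (I × I) → E} (hGc : ContinuousOn G (Rg n m)) (hGp : ∀ z ∈ Rg n m, p (G z) = H z) :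
    ∃ G' : (I × I) → E, ContinuousOn G' (Rg n m ∪ Sq n i j) ∧
      (∀ z ∈ Rg n m ∪ Sq n i j, p (G' z) = H z) ∧ Set.EqOn G' G (Rg n m) := by
  classical
  set i₀ : F := (T (G a)).2 with hi₀
  set G' : (I × I) → E := fun z => if z ∈ Rg n m then G z else sec T i₀ (H z) with hG'
  have hWsec : ∀ z ∈ W, G z = sec T i₀ (H z) :=
    eqOn_sec T (hGc.mono hW1) (fun z hz => hGp z (hW1 hz)) hW4
      (fun z hz => hT (hW2 hz)) ha
  have hG'R : Set.EqOn G' G (Rg n m) := fun z hz => if_pos hz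
  have hG'Sq : Set.EqOn G' (fun z => sec T i₀ (H z)) (Sq n i j) := by
    intro z hz
    by_cases h : z ∈ Rg n m
    · rw [hG'R h]
      exact hWsec z (hW3 ⟨hz, h⟩)
    · exact if_neg h
  have hcontSq : ContinuousOn (fun z => sec T i₀ (H z)) (Sq n i j) :=
    (continuousOn_sec T i₀).comp H.continuous.continuousOn hT
  refine ⟨G', continuousOn_union_closed (isClosed_Rg n m) (isClosed_Sq n i j)
    (hGc.congr hG'R) (hcontSq.congr hG'Sq), fun z hz => ?_, hG'R⟩
  by_cases h : z ∈ Rg n m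
  · rw [hG'R h]; exact hGp z h
  · have hzS : z ∈ Sq n i j := hz.resolve_left h
    rw [hG'Sq hzS]
    exact sec_proj T i₀ (hT hzS)

/-! ### Square lifting -/

theorem exists_square_lift (hp : IsCoveringMap p) (H : C(I × I, X)) (e : E)
    (he : p e = H (0, 0)) :
    ∃ G : C(I × I, E), (∀ z, p (G z) = H z) ∧ G (0, 0) = e := by
  classical
  have hne : ∀ z : I × I, Nonempty (p ⁻¹' {H z}) := fun z => by
    obtain ⟨Γ, hΓ, hΓ0⟩ := hp.exists_path_lifts
      (H.comp ⟨fun t : I => ((⟨(t : ℝ) * z.1, unitInterval.mul_mem t.2 z.1.2⟩ : I),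
        (⟨(t : ℝ) * z.2, unitInterval.mul_mem t.2 z.2.2⟩ : I)), by fun_prop⟩) e
      (by rw [he]; show H _ = H _; congr 1 <;> ext <;> simp)
    exact ⟨⟨Γ 1, by have := congrFun hΓ 1; simpa [← Subtype.coe_inj] using this⟩⟩
  obtain ⟨n, hn, hgrid⟩ := exists_grid hp H hne
  have hn' : (0 : ℝ) < n := Nat.cast_pos.2 hn
  have hcorner : ((0 : I), (0 : I)) ∈ Sq n 0 0 := by
    refine ⟨by norm_num, by positivity, by norm_num, by positivity⟩
  -- the invariant
  suffices h : ∀ m, 1 ≤ m → m ≤ n * n → ∃ G : (I × I) → E,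
      ContinuousOn G (Rg n m) ∧ (∀ z ∈ Rg n m, p (G z) = H z) ∧ G (0, 0) = e by
    obtain ⟨G, hGc, hGp, hGe⟩ := h (n * n) (Nat.one_le_iff_ne_zero.2 (by positivity)) le_rfl
    rw [Rg_eq_univ hn] at hGc hGp
    exact ⟨⟨G, continuousOn_univ.1 hGc⟩,
      fun z => hGp z trivial, hGe⟩
  intro m hm1
  induction m, hm1 using Nat.le_induction with
  | base =>
    intro _
    obtain ⟨x₀, _, hx₀⟩ := hgrid 0 0 hn hn
    have : DiscreteTopology (p ⁻¹' {x₀}) := (hp x₀).1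
    set T := (hp x₀).toTrivialization
    have heT : e ∈ T.source := T.mem_source.2 (by rw [he]; exact hx₀ hcorner)
    refine ⟨fun z => sec T (T e).2 (H z), ?_, ?_, ?_⟩
    · rw [show Rg n 1 = Sq n 0 0 by
        rw [Rg_succ]
        simp [Rg]]
      exact (continuousOn_sec T _).comp H.continuous.continuousOn (by simpa using hx₀)
    · intro z hz
      rw [show Rg n 1 = Sq n 0 0 by rw [Rg_succ]; simp [Rg]] at hz
      exact sec_proj T _ (by simpa using hx₀ hz)
    · show sec T (T e).2 (H (0, 0)) = e
      rw [← he]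
      exact sec_self T heT
  | succ m hm1 ih =>
    intro hm2
    obtain ⟨G, hGc, hGp, hGe⟩ := ih (le_of_lt hm2)
    obtain ⟨i, j, hi, hj, hdec⟩ : ∃ i j, i < n ∧ j < n ∧ i + n * j = m :=
      ⟨m % n, m / n, Nat.mod_lt _ hn, (Nat.div_lt_iff_lt_mul hn).2 hm2, Nat.mod_add_div m n⟩
    have hmod : m % n = i := by rw [← hdec, (grid_idx hi).1]
    have hdiv : m / n = j := by rw [← hdec, (grid_idx hi).2]
    obtain ⟨x₀, _, hx₀⟩ := hgrid i j hi hj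
    have : DiscreteTopology (p ⁻¹' {x₀}) := (hp x₀).1
    set T := (hp x₀).toTrivialization with hT
    have hiI : (i : ℝ)/n ∈ I := ⟨by positivity, by rw [div_le_one hn']; exact_mod_cast hi.le⟩
    have hjI : (j : ℝ)/n ∈ I := ⟨by positivity, by rw [div_le_one hn']; exact_mod_cast hj.le⟩
    have hcl : (⟨(i : ℝ)/n, hiI⟩, ⟨(j : ℝ)/n, hjI⟩)
        ∈ Box ((i : ℝ)/n) ((i : ℝ)/n) ((j : ℝ)/n) ((j+1 : ℕ)/n) :=
      ⟨le_rfl, le_rfl, le_rfl, div_mono_nat hn' (by push_cast; linarith)⟩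
    have hcb : (⟨(i : ℝ)/n, hiI⟩, ⟨(j : ℝ)/n, hjI⟩)
        ∈ Box ((i : ℝ)/n) ((i+1 : ℕ)/n) ((j : ℝ)/n) ((j : ℝ)/n) :=
      ⟨le_rfl, div_mono_nat hn' (by push_cast; linarith), le_rfl, le_rfl⟩
    have hlSq : Box ((i : ℝ)/n) ((i : ℝ)/n) ((j : ℝ)/n) ((j+1 : ℕ)/n) ⊆ Sq n i j := by
      rintro z ⟨h1, h2, h3, h4⟩
      exact ⟨h1, h2.trans (div_mono_nat hn' (by push_cast; linarith)), h3, h4⟩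
    have hbSq : Box ((i : ℝ)/n) ((i+1 : ℕ)/n) ((j : ℝ)/n) ((j : ℝ)/n) ⊆ Sq n i j := by
      rintro z ⟨h1, h2, h3, h4⟩
      exact ⟨h1, h2, h3, h4.trans (div_mono_nat hn' (by push_cast; linarith))⟩
    have hlR : 0 < i → Box ((i : ℝ)/n) ((i : ℝ)/n) ((j : ℝ)/n) ((j+1 : ℕ)/n) ⊆ Rg n m := by
      intro hipos z hz
      obtain ⟨i', rfl⟩ : ∃ i', i = i' + 1 := ⟨i - 1, (Nat.succ_pred_eq_of_pos hipos).symm⟩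
      obtain ⟨h1, h2, h3, h4⟩ := hz
      refine mem_Rg (k := i' + n * j) (by omega) ?_
      rw [(grid_idx (by omega : i' < n)).1, (grid_idx (by omega : i' < n)).2]
      exact ⟨(div_mono_nat hn' (by push_cast; linarith)).trans h1,
        h2.trans (div_mono_nat hn' (by push_cast; linarith)), h3, h4⟩
    have hbR : 0 < j → Box ((i : ℝ)/n) ((i+1 : ℕ)/n) ((j : ℝ)/n) ((j : ℝ)/n) ⊆ Rg n m := by
      intro hjpos z hz
      obtain ⟨j', rfl⟩ : ∃ j', j = j' + 1 := ⟨j - 1, (Nat.succ_pred_eq_of_pos hjpos).symm⟩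
      obtain ⟨h1, h2, h3, h4⟩ := hz
      have hnj : n * (j' + 1) = n * j' + n := by ring
      refine mem_Rg (k := i + n * j') (by omega) ?_
      rw [(grid_idx hi).1, (grid_idx hi).2]
      exact ⟨h1, h2, (div_mono_nat hn' (by push_cast; linarith)).trans h3,
        h4.trans (div_mono_nat hn' (by push_cast; linarith))⟩
    have hseam : ∀ z ∈ Sq n i j ∩ Rg n m,
        (0 < i ∧ z ∈ Box ((i : ℝ)/n) ((i : ℝ)/n) ((j : ℝ)/n) ((j+1 : ℕ)/n)) ∨
        (0 < j ∧ z ∈ Box ((i : ℝ)/n) ((i+1 : ℕ)/n) ((j : ℝ)/n) ((j : ℝ)/n)) := by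
      rintro z ⟨hzS, hzR⟩
      obtain ⟨k, hkm, hzk⟩ := Set.mem_iUnion₂.1 hzR
      have hkm : k < m := hkm
      obtain ⟨i', j', hi', hdec'⟩ : ∃ i' j', i' < n ∧ i' + n * j' = k :=
        ⟨k % n, k / n, Nat.mod_lt _ hn, Nat.mod_add_div k n⟩
      rw [← hdec', (grid_idx hi').1, (grid_idx hi').2] at hzk
      have hcases : j' < j ∨ (j' = j ∧ i' < i) := by
        have : ¬ j < j' := by
          intro hlt
          have h1 : n * (j + 1) ≤ n * j' := Nat.mul_le_mul_left n hlt
          have h2 : n * (j + 1) = n * j + n := by ring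
          omega
        rcases lt_trichotomy j' j with h | h | h
        · exact Or.inl h
        · subst h
          exact Or.inr ⟨rfl, by omega⟩
        · exact absurd h this
      obtain ⟨g1, g2, g3, g4⟩ := hzS
      obtain ⟨f1, f2, f3, f4⟩ := hzk
      rcases hcases with h | ⟨h, hii⟩
      · refine Or.inr ⟨by omega, g1, g2, g3,
          f4.trans (div_mono_nat hn' (by exact_mod_cast Nat.succ_le_of_lt h))⟩
      · subst h
        refine Or.inl ⟨by omega, g1,
          f2.trans (div_mono_nat hn' (by exact_mod_cast Nat.succ_le_of_lt hii)), g3, g4⟩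
    -- choose the seam W
    obtain ⟨W, hW1, hW2, hW3, hW4, haW⟩ :
        ∃ W : Set (I × I), W ⊆ Rg n m ∧ W ⊆ Sq n i j ∧ Sq n i j ∩ Rg n m ⊆ W ∧
          _root_.IsPreconnected W ∧ (⟨(i : ℝ)/n, hiI⟩, ⟨(j : ℝ)/n, hjI⟩) ∈ W := by
      rcases Nat.eq_zero_or_pos i with hi0 | hipos
      · rcases Nat.eq_zero_or_pos j with hj0 | hjpos
        · exfalso
          rw [hi0, hj0, Nat.mul_zero, Nat.add_zero] at hdec
          omega
        · refine ⟨_, hbR hjpos, hbSq, fun z hz => ?_, isPreconnected_Box _ _ _ _, hcb⟩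
          rcases hseam z hz with ⟨hipos, _⟩ | ⟨_, hzb⟩
          · omega
          · exact hzb
      · rcases Nat.eq_zero_or_pos j with hj0 | hjpos
        · refine ⟨_, hlR hipos, hlSq, fun z hz => ?_, isPreconnected_Box _ _ _ _, hcl⟩
          rcases hseam z hz with ⟨_, hzl⟩ | ⟨hjpos, _⟩
          · exact hzl
          · omega
        · refine ⟨_ ∪ _, Set.union_subset (hlR hipos) (hbR hjpos),
            Set.union_subset hlSq hbSq, fun z hz => ?_,
            (isPreconnected_Box _ _ _ _).union _ hcl hcb (isPreconnected_Box _ _ _ _),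
            Or.inl hcl⟩
          rcases hseam z hz with ⟨_, hzl⟩ | ⟨_, hzb⟩
          · exact Or.inl hzl
          · exact Or.inr hzb
    obtain ⟨G', hG'c, hG'p, hG'eq⟩ := extend_step T H hx₀ hW1 hW2 hW3 hW4 haW hGc hGp
    have h00 : ((0 : I), (0 : I)) ∈ Rg n m :=
      Rg_mono n hm1 (mem_Rg (k := 0) Nat.one_pos (by simpa using hcorner))
    rw [Rg_succ, hmod, hdiv]
    exact ⟨G', hG'c, hG'p, by rw [hG'eq h00]; exact hGe⟩

/-! ### Path lifting and monodromy -/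

theorem exists_path_lift (hp : IsCoveringMap p) (γ : C(I, X)) (e : E) (he : p e = γ 0) :
    ∃ Γ : C(I, E), (∀ t, p (Γ t) = γ t) ∧ Γ 0 = e := by
  obtain ⟨G, hG, hG0⟩ := exists_square_lift hp ⟨fun z => γ z.1, by fun_prop⟩ e he
  exact ⟨⟨fun t => G (t, 0), by fun_prop⟩, fun t => hG (t, 0), hG0⟩

/-- Monodromy: lifts of homotopic paths starting at the same point end
at the same point. -/
theorem lift_endpoint_eq (hp : IsCoveringMap p) {x x' : X} {ρ ρ' : Path x x'}
    (h : ρ.Homotopic ρ') {S T : C(I, E)} (hS : ∀ s, p (S s) = ρ s)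
    (hT : ∀ s, p (T s) = ρ' s) (h0 : S 0 = T 0) : S 1 = T 1 := by
  obtain ⟨Hh⟩ := h
  obtain ⟨G, hG, hG0⟩ := exists_square_lift hp Hh.toContinuousMap (S 0)
    (by rw [hS 0]; exact (Hh.apply_zero 0).symm)
  have bot : (fun t : I => G (t, 0)) = fun _ : I => S 0 := by
    refine hp.eq_of_comp_eq (by fun_prop) (by fun_prop) (funext fun t => ?_) 0 hG0
    show p (G (t, 0)) = p (S 0)
    rw [hG (t, 0), hS 0]
    exact (Hh.source t).trans ρ.source.symm
  have left : (fun s : I => G (0, s)) = ⇑S := by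
    refine hp.eq_of_comp_eq (by fun_prop) S.continuous (funext fun s => ?_) 0 hG0
    show p (G (0, s)) = p (S s)
    rw [hG (0, s), hS s]
    exact Hh.apply_zero s
  have right : (fun s : I => G (1, s)) = ⇑T := by
    refine hp.eq_of_comp_eq (by fun_prop) T.continuous (funext fun s => ?_) 0 ?_
    · show p (G (1, s)) = p (T s)
      rw [hG (1, s), hT s]
      exact Hh.apply_one s
    · show G (1, 0) = T 0
      rw [show G (1, 0) = S 0 from congrFun bot 1, h0]
  have top : (fun t : I => G (t, 1)) = fun _ : I => G (0, 1) := by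
    refine hp.eq_of_comp_eq (by fun_prop) (by fun_prop) (funext fun t => ?_) 0 rfl
    show p (G (t, 1)) = p (G (0, 1))
    rw [hG (t, 1), hG (0, 1)]
    exact (Hh.target t).trans (Hh.target 0).symm
  calc S 1 = G (0, 1) := (congrFun left 1).symm
  _ = G (1, 1) := (congrFun top 1).symm
  _ = T 1 := congrFun right 1

/-! ### Chosen lifts -/

/-- A chosen lift of a path starting at a chosen point in the fiber. -/
def liftP (hp : IsCoveringMap p) {a b : X} (γ : Path a b) (e : E) (he : p e = a) :
    C(I, E) :=
  (exists_path_lift hp γ.toContinuousMap e (he.trans γ.source.symm)).choose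

theorem liftP_proj (hp : IsCoveringMap p) {a b : X} (γ : Path a b) (e : E) (he : p e = a)
    (t : I) : p (liftP hp γ e he t) = γ t :=
  (exists_path_lift hp γ.toContinuousMap e (he.trans γ.source.symm)).choose_spec.1 t

theorem liftP_zero (hp : IsCoveringMap p) {a b : X} (γ : Path a b) (e : E) (he : p e = a) :
    liftP hp γ e he 0 = e :=
  (exists_path_lift hp γ.toContinuousMap e (he.trans γ.source.symm)).choose_spec.2

theorem cast_eval {x y x' y' : X} (γ : Path x y) (hx : x' = x) (hy : y' = y) (t : I) :
    (γ.cast hx hy) t = γ t := rfl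

theorem homotopic_cast {x y x' y' : X} {γ γ' : Path x y} (h : γ.Homotopic γ')
    (hx : x' = x) (hy : y' = y) : (γ.cast hx hy).Homotopic (γ'.cast hx hy) := by
  subst hx; subst hy
  exact h

theorem cast_cast {x y x' y' : X} (γ : Path x y) (hx : x' = x) (hy : y' = y)
    (hx' : x = x') (hy' : y = y') : (γ.cast hx hy).cast hx' hy' = γ := by
  subst hx; subst hy
  rfl

theorem lift_trans_ptwise {a b c : X} {σ' : Path a b} {τ' : Path b c}
    {e₁ e₂ e₃ : E} {Γ₁ : Path e₁ e₂} {Γ₂ : Path e₂ e₃}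
    (h₁ : ∀ t, p (Γ₁ t) = σ' t) (h₂ : ∀ t, p (Γ₂ t) = τ' t) (t : I) :
    p ((Γ₁.trans Γ₂) t) = (σ'.trans τ') t := by
  rw [Path.trans_apply, Path.trans_apply]
  split_ifs with h
  · exact h₁ _
  · exact h₂ _

/-! ### Construction of the lift -/

section Main

variable {Y : Type u} [TopologicalSpace Y] (hp : IsCoveringMap p) (f : C(Y, X))
  (y₀ : Y) (e₀ : E) (hfe : p e₀ = f y₀)

/-- Independence of the endpoint of the lift from the chosen path,
given the π₁ condition. -/
theorem endpoint_indep
    (cond : ∀ γ : Path y₀ y₀, ∃ Γ : Path e₀ e₀,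
      (Γ.map hp.continuous).Homotopic ((γ.map f.continuous).cast hfe hfe))
    {y : Y} (α β : Path y₀ y) {Sa Sb : C(I, E)}
    (hSa : ∀ t, p (Sa t) = (α.map f.continuous) t) (ha0 : Sa 0 = e₀)
    (hSb : ∀ t, p (Sb t) = (β.map f.continuous) t) (hb0 : Sb 0 = e₀) :
    Sa 1 = Sb 1 := by
  obtain ⟨Γ, hΓ⟩ := cond (α.trans β.symm)
  set u : Path (f y₀) (f y) := α.map f.continuous with hu
  set v : Path (f y₀) (f y) := β.map f.continuous with hv
  set w : Path (f y₀) (f y₀) := (Γ.map hp.continuous).cast hfe.symm hfe.symm with hw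
  have hmt : (α.trans β.symm).map f.continuous = u.trans v.symm := by
    rw [Path.map_trans, Path.map_symm]
  have h1 : w.Homotopic (u.trans v.symm) := by
    have := homotopic_cast hΓ hfe.symm hfe.symm
    rw [cast_cast, hmt] at this
    exact this
  have h2 : ((u.trans v.symm).trans v).Homotopic u := by
    have a1 : ((u.trans v.symm).trans v).Homotopic (u.trans (v.symm.trans v)) :=
      ⟨Path.Homotopy.transAssoc u v.symm v⟩
    have a2 : (v.symm.trans v).Homotopic (Path.refl (f y)) :=
      ⟨(Path.Homotopy.reflSymmTrans v).symm⟩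
    have a3 : (u.trans (v.symm.trans v)).Homotopic (u.trans (Path.refl (f y))) :=
      Path.Homotopic.hcomp (Path.Homotopic.refl u) a2
    have a4 : (u.trans (Path.refl (f y))).Homotopic u := ⟨Path.Homotopy.transRefl u⟩
    exact a1.trans (a3.trans a4)
  have hom : u.Homotopic (w.trans v) :=
    h2.symm.trans (Path.Homotopic.hcomp h1.symm (Path.Homotopic.refl v))
  -- the lift of `w.trans v`
  set SbP : Path e₀ (Sb 1) := ⟨Sb, hb0, rfl⟩ with hSbP
  have hT : ∀ t, p ((Γ.trans SbP) t) = (w.trans v) t :=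
    lift_trans_ptwise (fun t => rfl) hSb
  have := lift_endpoint_eq hp hom hSa hT (by rw [ha0]; exact (Path.source _).symm)
  rw [this]
  exact Path.target _

variable [PathConnectedSpace Y] [LocallyPathConnectedSpace Y]

theorem exists_lift
    (cond : ∀ γ : Path y₀ y₀, ∃ Γ : Path e₀ e₀,
      (Γ.map hp.continuous).Homotopic ((γ.map f.continuous).cast hfe hfe)) :
    ∃ g : C(Y, E), (∀ y, p (g y) = f y) ∧ g y₀ = e₀ := by
  classical
  set g : Y → E := fun y =>
    liftP hp ((PathConnectedSpace.somePath y₀ y).map f.continuous) e₀ hfe 1 with hg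
  -- generic endpoint description
  have hgen : ∀ (y : Y) (β : Path y₀ y) (Sb : C(I, E)),
      (∀ t, p (Sb t) = (β.map f.continuous) t) → Sb 0 = e₀ → g y = Sb 1 := by
    intro y β Sb hSb hb0
    exact endpoint_indep hp f y₀ e₀ hfe cond (PathConnectedSpace.somePath y₀ y) β
      (fun t => liftP_proj hp _ e₀ hfe t) (liftP_zero hp _ e₀ hfe) hSb hb0
  have hproj : ∀ y, p (g y) = f y := by
    intro y
    rw [hg]
    have := liftP_proj hp ((PathConnectedSpace.somePath y₀ y).map f.continuous) e₀ hfe 1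
    rw [this]
    show f (PathConnectedSpace.somePath y₀ y 1) = f y
    rw [Path.target]
  have hbase : g y₀ = e₀ := by
    refine hgen y₀ (Path.refl y₀) ⟨fun _ => e₀, continuous_const⟩ (fun t => ?_) rfl
    show p e₀ = f (Path.refl y₀ t)
    simp [hfe]
  -- continuity
  have hcont : Continuous g := by
    rw [continuous_iff_continuousAt]
    intro y₁
    haveI : Nonempty (p ⁻¹' {f y₁}) := ⟨⟨g y₁, hproj y₁⟩⟩
    obtain ⟨T, hTb, hTd⟩ : ∃ T : Bundle.Trivialization (p ⁻¹' {f y₁}) p,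
        f y₁ ∈ T.baseSet ∧ DiscreteTopology (p ⁻¹' {f y₁}) :=
      ⟨(hp (f y₁)).toTrivialization, (hp (f y₁)).mem_toTrivialization_baseSet, (hp (f y₁)).1⟩
    have hgy₁ : g y₁ ∈ T.source := T.mem_source.2 (by rw [hproj y₁]; exact hTb)
    set i₁ := (T (g y₁)).2 with hi₁
    -- a path connected neighborhood inside f ⁻¹' T.baseSet
    have hVnhds : f ⁻¹' T.baseSet ∈ 𝓝 y₁ :=
      f.continuous.continuousAt.preimage_mem_nhds (T.open_baseSet.mem_nhds hTb)
    obtain ⟨O, ⟨hOnhds, hOpc⟩, hOV⟩ := (LocallyPathConnectedSpace.path_connected_basis y₁).mem_iff.1 hVnhds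
    have heq : ∀ y ∈ O, g y = sec T i₁ (f y) := by
      intro y hy
      have hy₁O : y₁ ∈ O := mem_of_mem_nhds hOnhds
      obtain ⟨c, hc⟩ : ∃ c : Path y₁ y, ∀ t, c t ∈ O := by
        obtain ⟨c, hc⟩ := hOpc.joinedIn y₁ hy₁O y hy
        exact ⟨c, hc⟩
      -- lift of (somePath y₀ y₁).map f, then ride the sheet along c
      set S₁ := liftP hp ((PathConnectedSpace.somePath y₀ y₁).map f.continuous) e₀ hfe with hS₁
      have hS₁1 : S₁ 1 = g y₁ := rfl
      set D : C(I, E) := ⟨fun t => sec T i₁ (f (c t)), by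
        refine (continuousOn_sec T i₁).comp_continuous
          (f.continuous.comp c.continuous) fun t => hOV (hc t)⟩ with hD
      have hD0 : D 0 = g y₁ := by
        show sec T i₁ (f (c 0)) = g y₁
        have h1 : f (c 0) = p (g y₁) := by rw [c.source]; exact (hproj y₁).symm
        exact (congrArg (sec T i₁) h1).trans (sec_self T hgy₁)
      have hDproj : ∀ t, p (D t) = (c.map f.continuous) t := fun t =>
        sec_proj T i₁ (hOV (hc t))
      set S₁P : Path e₀ (g y₁) := ⟨S₁, liftP_zero hp _ e₀ hfe, hS₁1⟩ with hS₁P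
      set DP : Path (g y₁) (D 1) := ⟨D, hD0, rfl⟩ with hDP
      have hSb : ∀ t, p ((S₁P.trans DP) t)
          = (((PathConnectedSpace.somePath y₀ y₁).trans c).map f.continuous) t := by
        rw [Path.map_trans]
        exact lift_trans_ptwise (fun t => liftP_proj hp _ e₀ hfe t) hDproj
      have := hgen y ((PathConnectedSpace.somePath y₀ y₁).trans c)
        (S₁P.trans DP).toContinuousMap hSb (Path.source _)
      rw [this]
      show (S₁P.trans DP) 1 = sec T i₁ (f y)
      rw [Path.target]
      show sec T i₁ (f (c 1)) = sec T i₁ (f y)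
      rw [c.target]
    have hca : ContinuousAt (fun y => sec T i₁ (f y)) y₁ :=
      ((continuousOn_sec T i₁).continuousAt (T.open_baseSet.mem_nhds hTb)).comp
        f.continuous.continuousAt
    refine hca.congr ?_
    refine Filter.eventuallyEq_of_mem hOnhds fun y hy => (heq y hy).symm
  exact ⟨⟨g, hcont⟩, hproj, hbase⟩

end Main

section Algebra

open CategoryTheory

attribute [local instance] Path.Homotopic.setoid

theorem exists_fromLoop {X : Type u} [TopologicalSpace X] {x : X}
    (a : FundamentalGroup X x) : ∃ γ : Path x x, a = FundamentalGroup.fromLoop γ := by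
  obtain ⟨γ, hγ⟩ := Quotient.exists_rep
    (show Path.Homotopic.Quotient x x from a)
  exact ⟨γ, hγ.symm⟩

theorem fromLoop_inj {X : Type u} [TopologicalSpace X] {x : X} {a b : Path x x}
    (h : FundamentalGroup.fromLoop a = FundamentalGroup.fromLoop b) : a.Homotopic b :=
  Quotient.exact h

theorem inducedHom_fromLoop {Y X : Type u} [TopologicalSpace Y]
    [TopologicalSpace X] (f : C(Y, X)) (y₀ : Y) (x₀ : X) (hf : f y₀ = x₀) (γ : Path y₀ y₀) :
    FundamentalGroup.inducedHom f y₀ x₀ hf (FundamentalGroup.fromLoop γ)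
      = FundamentalGroup.fromLoop ((γ.map f.continuous).cast hf.symm hf.symm) := by
  subst hf
  show 𝟙 _ ≫ ((FundamentalGroupoid.fundamentalGroupoidFunctor.map
      (TopCat.ofHom f)).map
        (Quotient.mk (Path.Homotopic.setoid y₀ y₀) γ)) ≫ 𝟙 _ = _
  rw [Category.id_comp, Category.comp_id]
  exact (Path.Homotopic.Quotient.mk_map γ f).symm

end Algebra

end LiftCrit

/-- **Lifting criterion** (Hatcher Prop. 1.33). Let `p : E → X` be a covering map with
`p e₀ = x₀`, and let `Y` be a path-connected, locally path-connected space with basepoint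
`y₀`. A continuous map `f : Y → X` with `f y₀ = x₀` lifts to a continuous `g : Y → E` with
`p ∘ g = f` and `g y₀ = e₀` iff `f⁎ π₁(Y, y₀) ⊆ p⁎ π₁(E, e₀)`. -/
theorem lifting_criterion {E X Y : Type u} [TopologicalSpace E] [TopologicalSpace X]
    [TopologicalSpace Y] [PathConnectedSpace Y] [LocallyPathConnectedSpace Y]
    {p : E → X} (hp : IsCoveringMap p) (e₀ : E) (x₀ : X) (he : p e₀ = x₀)
    (y₀ : Y) (f : C(Y, X)) (hf : f y₀ = x₀) :
    (∃ g : C(Y, E), (∀ y, p (g y) = f y) ∧ g y₀ = e₀) ↔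
      (FundamentalGroup.inducedHom f y₀ x₀ hf).range ≤
        (FundamentalGroup.inducedHom ⟨p, hp.continuous⟩ e₀ x₀ he).range := by
  subst he
  constructor
  · rintro ⟨g, hgp, hg0⟩ a ha
    obtain ⟨b, rfl⟩ := ha
    obtain ⟨γ, rfl⟩ := LiftCrit.exists_fromLoop b
    rw [LiftCrit.inducedHom_fromLoop]
    refine MonoidHom.mem_range.2
      ⟨FundamentalGroup.fromLoop ((γ.map g.continuous).cast hg0.symm hg0.symm), ?_⟩
    rw [LiftCrit.inducedHom_fromLoop]
    congr 1
    ext t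
    exact hgp (γ t)
  · intro hrange
    refine LiftCrit.exists_lift hp f y₀ e₀ hf.symm ?_
    intro γ
    obtain ⟨c, hc⟩ := hrange (MonoidHom.mem_range.2 ⟨FundamentalGroup.fromLoop γ, rfl⟩)
    obtain ⟨Γ, rfl⟩ := LiftCrit.exists_fromLoop c
    rw [LiftCrit.inducedHom_fromLoop, LiftCrit.inducedHom_fromLoop] at hc
    exact ⟨Γ, LiftCrit.fromLoop_inj hc⟩
end
end

section
/- Let X be a path-connected, locally path-connected topological space with basepoint x₀, and assume X is semilocally simply connected, i.e. every point x ∈ X has a neighbourhood U such that every loop contained in U and based at x is null-homotopic in X. Then for every subgroup H of π₁(X, x₀) there exist a topological space E, a covering map p : E → X with E path-connected, and a point e₀ ∈ E with p(e₀) = x₀, such that the image of p_* : π₁(E, e₀) → π₁(X, x₀) equals H. -/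
open CategoryTheory

open CategoryTheory
noncomputable section
namespace CovCons
open Set
universe v
variable {X : Type v} [TopologicalSpace X]
attribute [local instance] Path.Homotopic.setoid

/-- homotopy class of a path, as a morphism in the fundamental groupoid -/
def cls {x y : X} (p : Path x y) : (⟨x⟩ : FundamentalGroupoid X) ⟶ ⟨y⟩ := ⟦p⟧

lemma cls_trans {x y z : X} (p : Path x y) (q : Path y z) :
    cls (p.trans q) = cls p ≫ cls q := (Path.Homotopic.Quotient.mk_trans p q)

lemma cls_symm {x y : X} (p : Path x y) : cls p.symm = inv (cls p) := by
  rw [← Groupoid.inv_eq_inv]; rfl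

lemma cls_refl (x : X) : cls (Path.refl x) = 𝟙 (⟨x⟩ : FundamentalGroupoid X) := rfl

lemma cls_homotopic {x y : X} {p q : Path x y} (h : p.Homotopic q) : cls p = cls q :=
  Quotient.sound h

lemma fromLoop_hom {x : X} (ℓ : Path x x) : FundamentalGroup.fromLoop ℓ = cls ℓ := rfl

lemma fromLoop_eq_iff {x : X} {a b : Path x x} :
    FundamentalGroup.fromLoop a = FundamentalGroup.fromLoop b ↔ cls a = cls b :=
  ⟨fun h => h, fun h => h⟩

lemma fromLoop_one (x : X) : FundamentalGroup.fromLoop (Path.refl x) = 1 := rfl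

lemma fromLoop_eq_one_of {x : X} {ℓ : Path x x}
    (h : cls ℓ = 𝟙 (⟨x⟩ : FundamentalGroupoid X)) : FundamentalGroup.fromLoop ℓ = 1 :=
  h

lemma fromLoop_mul {x : X} (a b : Path x x) :
    FundamentalGroup.fromLoop b * FundamentalGroup.fromLoop a
      = FundamentalGroup.fromLoop (a.trans b) := by
  show cls a ≫ cls b = cls (a.trans b)
  rw [cls_trans]

lemma fromLoop_inv {x : X} (a : Path x x) :
    (FundamentalGroup.fromLoop a)⁻¹ = FundamentalGroup.fromLoop a.symm := by
  rfl

lemma exists_fromLoop {x : X} (g : FundamentalGroup X x) :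
    ∃ ℓ : Path x x, g = FundamentalGroup.fromLoop ℓ := by
  obtain ⟨ℓ, h⟩ := Quotient.exists_rep (s := Path.Homotopic.setoid x x) g
  exact ⟨ℓ, h.symm⟩

end CovCons
namespace CovCons
open Set
universe u'
variable {X : Type u'} [TopologicalSpace X]
attribute [local instance] Path.Homotopic.setoid

lemma path_cast_rfl {x y : X} (γ : Path x y) : γ.cast rfl rfl = γ := by
  ext t; rfl

variable (x₀ : X) (H : Subgroup (FundamentalGroup X x₀))

/-- The relation on paths from `x₀`: same endpoint and difference loop in `H`. -/
def Rel (A B : Σ x : X, Path x₀ x) : Prop :=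
  ∃ h : A.1 = B.1, FundamentalGroup.fromLoop (A.2.trans ((B.2.cast rfl h).symm)) ∈ H

variable {x₀}

lemma rel_iff {x : X} {a b : Path x₀ x} :
    Rel x₀ H ⟨x, a⟩ ⟨x, b⟩ ↔ FundamentalGroup.fromLoop (a.trans b.symm) ∈ H := by
  constructor
  · rintro ⟨h, hh⟩
    have : h = rfl := Subsingleton.elim _ _
    subst this; rwa [path_cast_rfl] at hh
  · intro hh; exact ⟨rfl, by rwa [path_cast_rfl]⟩

variable (x₀)

/-- The setoid used to construct the covering space. -/
def covSetoid : Setoid (Σ x : X, Path x₀ x) where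
  r := Rel x₀ H
  iseqv := by
    constructor
    · rintro ⟨x, a⟩
      refine (rel_iff H).mpr ?_
      rw [fromLoop_eq_one_of (by simp [cls_trans, cls_symm])]
      exact H.one_mem
    · rintro ⟨x, a⟩ ⟨y, b⟩ ⟨h, hab⟩
      cases h
      rw [path_cast_rfl] at hab
      refine (rel_iff H).mpr ?_
      have : FundamentalGroup.fromLoop (b.trans a.symm)
          = (FundamentalGroup.fromLoop (a.trans b.symm))⁻¹ := by
        rw [fromLoop_inv, fromLoop_eq_iff]
        simp [cls_trans, cls_symm]
      rw [this]; exact H.inv_mem hab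
    · rintro ⟨x, a⟩ ⟨y, b⟩ ⟨z, c⟩ ⟨h1, h12⟩ ⟨h2, h23⟩
      cases h1; cases h2
      rw [path_cast_rfl] at h12 h23
      refine (rel_iff H).mpr ?_
      have : FundamentalGroup.fromLoop (a.trans c.symm)
          = FundamentalGroup.fromLoop (b.trans c.symm)
            * FundamentalGroup.fromLoop (a.trans b.symm) := by
        rw [fromLoop_mul, fromLoop_eq_iff]
        simp [cls_trans, cls_symm]
      rw [this]; exact H.mul_mem h23 h12

/-- The covering space: paths from `x₀` modulo `H`-equivalence. -/
def Cov : Type u' := Quotient (covSetoid x₀ H)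

variable {x₀}

/-- Class of a path in the covering space. -/
def mk' {x : X} (a : Path x₀ x) : Cov x₀ H := Quotient.mk (covSetoid x₀ H) ⟨x, a⟩

variable (x₀)

/-- Projection to the base space. -/
def proj : Cov x₀ H → X :=
  Quotient.lift (fun A => A.1) (by rintro A B ⟨h, _⟩; exact h)

variable {x₀}

@[simp] lemma proj_mk {x : X} (a : Path x₀ x) : proj x₀ H (mk' H a) = x := rfl

lemma mk_eq_mk {x : X} {a b : Path x₀ x} :
    mk' H a = mk' H b ↔ FundamentalGroup.fromLoop (a.trans b.symm) ∈ H :=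
  ⟨fun h => (rel_iff H).mp (Quotient.exact h), fun h => Quotient.sound ((rel_iff H).mpr h)⟩

lemma mk_eq_of_cls {x : X} {a b : Path x₀ x} (h : cls a = cls b) : mk' H a = mk' H b := by
  rw [mk_eq_mk]
  rw [fromLoop_eq_one_of (by simp [cls_trans, cls_symm, h])]
  exact H.one_mem

lemma mk_trans_congr {x y : X} {a b : Path x₀ x} (δ : Path x y) (h : mk' H a = mk' H b) :
    mk' H (a.trans δ) = mk' H (b.trans δ) := by
  rw [mk_eq_mk] at h ⊢
  have : FundamentalGroup.fromLoop ((a.trans δ).trans ((b.trans δ)).symm)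
      = FundamentalGroup.fromLoop (a.trans b.symm) := by
    rw [fromLoop_eq_iff]; simp [cls_trans, cls_symm]
  rwa [this]

lemma sound' {x y : X} (a : Path x₀ x) (b : Path x₀ y) (h : x = y)
    (hc : cls a = cls (b.cast rfl h)) : mk' H a = mk' H b := by
  cases h
  rw [path_cast_rfl] at hc
  exact mk_eq_of_cls H hc

/-- Basic open set: points reachable from `mk' H a` along a path inside `U`. -/
def basic {x : X} (a : Path x₀ x) (U : Set X) : Set (Cov x₀ H) :=
  {e | ∃ (y : X) (δ : Path x y), range δ ⊆ U ∧ e = mk' H (a.trans δ)}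

variable (x₀)

instance : TopologicalSpace (Cov x₀ H) :=
  .generateFrom {s | ∃ (x : X) (a : Path x₀ x) (U : Set X), IsOpen U ∧ s = basic H a U}

variable {x₀}

lemma isOpen_basic {x : X} (a : Path x₀ x) {U : Set X} (hU : IsOpen U) :
    IsOpen (basic H a U) :=
  TopologicalSpace.isOpen_generateFrom_of_mem ⟨x, a, U, hU, rfl⟩

lemma mem_basic_self {x : X} (a : Path x₀ x) {U : Set X} (hx : x ∈ U) :
    mk' H a ∈ basic H a U := by
  refine ⟨x, Path.refl x, ?_, ?_⟩
  · rw [Path.refl_range]; exact singleton_subset_iff.mpr hx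
  · exact (mk_eq_of_cls H (by simp [cls_trans, cls_refl])).symm

lemma basic_mono {x : X} (a : Path x₀ x) {U V : Set X} (hUV : U ⊆ V) :
    basic H a U ⊆ basic H a V := by
  rintro e ⟨y, δ, h1, h2⟩; exact ⟨y, δ, h1.trans hUV, h2⟩

lemma proj_mem_of_mem_basic {x : X} {a : Path x₀ x} {U : Set X} {e : Cov x₀ H}
    (h : e ∈ basic H a U) : proj x₀ H e ∈ U := by
  obtain ⟨y, δ, h1, rfl⟩ := h
  exact h1 ⟨1, δ.target⟩

lemma start_mem_of_basic_nonempty {x : X} {a : Path x₀ x} {U : Set X}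
    (h : (basic H a U).Nonempty) : x ∈ U := by
  obtain ⟨e, y, δ, h1, rfl⟩ := h
  exact h1 ⟨0, δ.source⟩

lemma basic_eq_of_mem {x y : X} {a : Path x₀ x} {b : Path x₀ y} {U : Set X}
    (hb : mk' H b ∈ basic H a U) : basic H a U = basic H b U := by
  obtain ⟨z, δ, hδ, he⟩ := hb
  have hyz : y = z := congrArg (proj x₀ H) he
  subst hyz
  ext e
  constructor
  · rintro ⟨w, ε, hε, rfl⟩
    refine ⟨w, δ.symm.trans ε, ?_, ?_⟩
    · rw [Path.trans_range, Path.symm_range]; exact union_subset hδ hε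
    · have h1 : mk' H (b.trans (δ.symm.trans ε))
          = mk' H ((a.trans δ).trans (δ.symm.trans ε)) := mk_trans_congr H _ he
      have h2 : mk' H ((a.trans δ).trans (δ.symm.trans ε)) = mk' H (a.trans ε) :=
        mk_eq_of_cls H (by simp [cls_trans, cls_symm])
      rw [h1, h2]
  · rintro ⟨w, ε, hε, rfl⟩
    refine ⟨w, δ.trans ε, ?_, ?_⟩
    · rw [Path.trans_range]; exact union_subset hδ hε
    · have h1 : mk' H (b.trans ε) = mk' H ((a.trans δ).trans ε) := mk_trans_congr H _ he
      have h2 : mk' H ((a.trans δ).trans ε) = mk' H (a.trans (δ.trans ε)) :=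
        mk_eq_of_cls H (by simp [cls_trans])
      rw [h1, h2]

variable (x₀)

lemma continuous_proj : Continuous (proj x₀ H) := by
  rw [continuous_def]
  intro V hV
  rw [isOpen_iff_forall_mem_open]
  intro e he
  induction e using Quotient.inductionOn with
  | h A =>
    obtain ⟨y, b⟩ := A
    exact ⟨basic H b V, fun e' h' => proj_mem_of_mem_basic H h', isOpen_basic H b hV,
      mem_basic_self H b he⟩

end CovCons
namespace CovCons
open Set
universe u2
variable {X : Type u2} [TopologicalSpace X]
attribute [local instance] Path.Homotopic.setoid
attribute [local instance] Classical.propDecidable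
variable {x₀ : X} (H : Subgroup (FundamentalGroup X x₀))

/-- A good open set: open, path-connected, and all loops inside it are null-homotopic in `X`. -/
def Good (U : Set X) : Prop :=
  IsOpen U ∧ IsPathConnected U ∧
    ∀ (z : X) (ℓ : Path z z), range ℓ ⊆ U → cls ℓ = 𝟙 (⟨z⟩ : FundamentalGroupoid X)

lemma exists_good [LocallyPathConnectedSpace X]
    (hX : ∀ x : X, ∃ U ∈ nhds x, ∀ γ : Path x x, (∀ t, γ t ∈ U) → γ.Homotopic (Path.refl x))
    (x : X) {V : Set X} (hV : V ∈ nhds x) : ∃ U, Good U ∧ x ∈ U ∧ U ⊆ V := by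
  obtain ⟨W, hW, hloop⟩ := hX x
  set O := interior (W ∩ V) with hO
  have hxO : x ∈ O := mem_interior_iff_mem_nhds.mpr (Filter.inter_mem hW hV)
  have hOW : O ⊆ W := interior_subset.trans inter_subset_left
  refine ⟨pathComponentIn O x, ⟨isOpen_interior.pathComponentIn x,
    isPathConnected_pathComponentIn hxO, ?_⟩, mem_pathComponentIn_self hxO,
    pathComponentIn_subset.trans (interior_subset.trans inter_subset_right)⟩
  intro z ℓ hℓ
  have hz : JoinedIn O x z := hℓ ⟨0, ℓ.source⟩
  set c := hz.somePath with hc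
  have hrc : range c ⊆ W := (range_subset_iff.mpr hz.somePath_mem).trans hOW
  have hrl : range ℓ ⊆ W := hℓ.trans (pathComponentIn_subset.trans hOW)
  have key : ((c.trans ℓ).trans c.symm).Homotopic (Path.refl x) := by
    apply hloop
    intro t
    have ht : (c.trans ℓ).trans c.symm t ∈ range ((c.trans ℓ).trans c.symm) :=
      mem_range_self t
    rw [Path.trans_range, Path.trans_range, Path.symm_range] at ht
    rcases ht with (h | h) | h
    · exact hrc h
    · exact hrl h
    · exact hrc h
  have hkey2 : cls ((c.trans ℓ).trans c.symm) = 𝟙 (⟨x⟩ : FundamentalGroupoid X) := by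
    rw [cls_homotopic key, cls_refl]
  have h2 : cls c ≫ cls ℓ ≫ inv (cls c) = 𝟙 (⟨x⟩ : FundamentalGroupoid X) := by
    simpa [cls_trans, cls_symm, Category.assoc] using hkey2
  calc cls ℓ = inv (cls c) ≫ (cls c ≫ cls ℓ ≫ inv (cls c)) ≫ cls c := by simp
    _ = 𝟙 _ := by rw [h2]; simp

/-- A chosen path inside a path-connected set. -/
def pathIn {U : Set X} (hU : IsPathConnected U) {y z : X} (hy : y ∈ U) (hz : z ∈ U) :
    Path y z := (hU.joinedIn y hy z hz).somePath

lemma pathIn_range {U : Set X} (hU : IsPathConnected U) {y z : X} (hy : y ∈ U) (hz : z ∈ U) :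
    range (pathIn hU hy hz) ⊆ U :=
  range_subset_iff.mpr (JoinedIn.somePath_mem _)

/-- Representative-level slide map. -/
def slideFun {U : Set X} (hU : Good U) {z : X} (hz : z ∈ U) (junk : Cov x₀ H)
    (A : Σ x : X, Path x₀ x) : Cov x₀ H :=
  if h : A.1 ∈ U then mk' H (A.2.trans (pathIn hU.2.1 h hz)) else junk

/-- Slide a point of the covering space along `U` to sit over `z`. -/
def slide {U : Set X} (hU : Good U) {z : X} (hz : z ∈ U) (junk : Cov x₀ H) :
    Cov x₀ H → Cov x₀ H :=
  Quotient.lift (slideFun H hU hz junk) (by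
    rintro ⟨y, b⟩ ⟨y', b'⟩ hr
    have hr' := hr
    obtain ⟨h, -⟩ := hr'
    cases h
    have hbb : mk' H b = mk' H b' := Quotient.sound hr
    by_cases h : y ∈ U
    · simp only [slideFun, dif_pos h]
      exact mk_trans_congr H _ hbb
    · simp only [slideFun, dif_neg h])

lemma slide_mk {U : Set X} (hU : Good U) {z : X} (hz : z ∈ U) (junk : Cov x₀ H)
    {y : X} (b : Path x₀ y) (hy : y ∈ U) (δ : Path y z) (hδ : range δ ⊆ U) :
    slide H hU hz junk (mk' H b) = mk' H (b.trans δ) := by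
  show slideFun H hU hz junk ⟨y, b⟩ = _
  rw [slideFun, dif_pos hy]
  apply mk_eq_of_cls
  have hcδ : cls (pathIn hU.2.1 hy hz) = cls δ := by
    have hloop : cls ((pathIn hU.2.1 hy hz).trans δ.symm) = 𝟙 (⟨y⟩ : FundamentalGroupoid X) := by
      apply hU.2.2
      rw [Path.trans_range, Path.symm_range]
      exact union_subset (pathIn_range hU.2.1 hy hz) hδ
    rw [cls_trans, cls_symm, IsIso.comp_inv_eq] at hloop
    simpa using hloop
  rw [cls_trans, cls_trans, hcδ]

lemma proj_slide {U : Set X} (hU : Good U) {z : X} (hz : z ∈ U) (junk : Cov x₀ H)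
    (e : Cov x₀ H) (h : proj x₀ H e ∈ U) : proj x₀ H (slide H hU hz junk e) = z := by
  induction e using Quotient.inductionOn with
  | h A =>
    obtain ⟨y, b⟩ := A
    show proj x₀ H (slideFun H hU hz junk ⟨y, b⟩) = z
    rw [slideFun, dif_pos (show y ∈ U from h)]
    rfl

variable [PathConnectedSpace X]

/-- A default point in each fiber. -/
def fiberPt (x : X) : ↥(proj x₀ H ⁻¹' {x}) :=
  ⟨mk' H (PathConnectedSpace.somePath x₀ x), rfl⟩

/-- The sheet function: which element of the fiber over `x` a point of `proj ⁻¹' U` belongs to. -/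
def sF {U : Set X} (hU : Good U) {x : X} (hx : x ∈ U) (e : Cov x₀ H) : ↥(proj x₀ H ⁻¹' {x}) :=
  if h : proj x₀ H e ∈ U then ⟨slide H hU hx e e, proj_slide H hU hx e e h⟩ else fiberPt H x

lemma sF_mk {U : Set X} (hU : Good U) {x : X} (hx : x ∈ U) {y : X} (b : Path x₀ y)
    (hy : y ∈ U) (δ : Path y x) (hδ : range δ ⊆ U) :
    (sF H hU hx (mk' H b) : Cov x₀ H) = mk' H (b.trans δ) := by
  rw [sF, dif_pos (show proj x₀ H (mk' H b) ∈ U from hy)]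
  exact slide_mk H hU hx _ b hy δ hδ

lemma sF_congr_basic {U : Set X} (hU : Good U) {x : X} (hx : x ∈ U) {y : X} {b : Path x₀ y}
    (hy : y ∈ U) {V : Set X} (hVU : V ⊆ U) {e : Cov x₀ H} (he : e ∈ basic H b V) :
    sF H hU hx e = sF H hU hx (mk' H b) := by
  obtain ⟨w, δ, hδ, rfl⟩ := he
  have hw : w ∈ U := hVU (hδ ⟨1, δ.target⟩)
  apply Subtype.ext
  rw [sF_mk H hU hx (b.trans δ) hw (pathIn hU.2.1 hw hx) (pathIn_range hU.2.1 hw hx),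
      sF_mk H hU hx b hy (δ.trans (pathIn hU.2.1 hw hx))
        (by rw [Path.trans_range]
            exact union_subset (hδ.trans hVU) (pathIn_range hU.2.1 hw hx))]
  exact mk_eq_of_cls H (by simp [cls_trans])

lemma fiber_rep {x : X} (f : ↥(proj x₀ H ⁻¹' {x})) :
    ∃ a : Path x₀ x, (f : Cov x₀ H) = mk' H a := by
  obtain ⟨e, he⟩ := f
  induction e using Quotient.inductionOn with
  | h A =>
    obtain ⟨y, a⟩ := A
    have hy : y = x := he
    subst hy
    exact ⟨a, rfl⟩

lemma sF_fiber {U : Set X} (hU : Good U) {x : X} (hx : x ∈ U) (f : ↥(proj x₀ H ⁻¹' {x})) :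
    sF H hU hx (f : Cov x₀ H) = f := by
  obtain ⟨a, ha⟩ := fiber_rep H f
  apply Subtype.ext
  rw [ha, sF_mk H hU hx a hx (pathIn hU.2.1 hx hx) (pathIn_range hU.2.1 hx hx)]
  have hcl : cls (pathIn hU.2.1 hx hx) = 𝟙 (⟨x⟩ : FundamentalGroupoid X) :=
    hU.2.2 _ _ (pathIn_range hU.2.1 hx hx)
  exact mk_eq_of_cls H (by simp [cls_trans, hcl])

lemma fiber_discrete {U : Set X} (hU : Good U) {x : X} (hx : x ∈ U) :
    DiscreteTopology ↥(proj x₀ H ⁻¹' {x}) := by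
  rw [discreteTopology_iff_isOpen_singleton]
  intro f
  obtain ⟨a, ha⟩ := fiber_rep H f
  have hset : {f} = (Subtype.val : ↥(proj x₀ H ⁻¹' {x}) → Cov x₀ H) ⁻¹' (basic H a U) := by
    ext g
    simp only [mem_singleton_iff, mem_preimage]
    constructor
    · rintro rfl; rw [ha]; exact mem_basic_self H a hx
    · rintro ⟨w, δ, hδ, hg⟩
      have hw : w = x := by
        have h2 := g.2
        rw [hg] at h2
        exact h2
      subst hw
      have hδ1 := hU.2.2 _ δ hδ
      apply Subtype.ext
      rw [hg, ha]
      exact mk_eq_of_cls H (by simp [cls_trans, hδ1])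
  rw [hset]
  exact (isOpen_basic H a hU.1).preimage continuous_subtype_val

/-- Inverse of the trivialization. -/
def invF {U : Set X} (hU : Good U) {x : X} (hx : x ∈ U)
    (q : X × ↥(proj x₀ H ⁻¹' {x})) : Cov x₀ H :=
  if h : q.1 ∈ U then slide H hU h (q.2 : Cov x₀ H) (q.2 : Cov x₀ H) else (q.2 : Cov x₀ H)

lemma invF_eq {U : Set X} (hU : Good U) {x : X} (hx : x ∈ U) {y : X} (hy : y ∈ U)
    (f : ↥(proj x₀ H ⁻¹' {x})) {a : Path x₀ x} (ha : (f : Cov x₀ H) = mk' H a)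
    (δ : Path x y) (hδ : range δ ⊆ U) :
    invF H hU hx (y, f) = mk' H (a.trans δ) := by
  rw [invF]
  dsimp only
  rw [dif_pos hy, ha]
  exact slide_mk H hU hy _ a hx δ hδ

lemma continuousOn_sF {U : Set X} (hU : Good U) {x : X} (hx : x ∈ U)
    [LocallyPathConnectedSpace X] :
    ContinuousOn (sF H hU hx) (proj x₀ H ⁻¹' U) := by
  intro e he
  apply ContinuousAt.continuousWithinAt
  induction e using Quotient.inductionOn with
  | h A =>
    obtain ⟨y, b⟩ := A
    have hy : y ∈ U := he
    set W := pathComponentIn U y with hW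
    have hWopen : IsOpen W := hU.1.pathComponentIn y
    have hyW : y ∈ W := mem_pathComponentIn_self hy
    have hN : basic H b W ∈ nhds (mk' H b) :=
      (isOpen_basic H b hWopen).mem_nhds (mem_basic_self H b hyW)
    apply Filter.EventuallyEq.continuousAt (y := sF H hU hx (mk' H b))
    apply Filter.eventuallyEq_of_mem hN
    intro e' he'
    exact sF_congr_basic H hU hx hy pathComponentIn_subset he'

lemma continuousOn_invF {U : Set X} (hU : Good U) {x : X} (hx : x ∈ U)
    [LocallyPathConnectedSpace X] :
    ContinuousOn (invF H hU hx) (U ×ˢ (univ : Set ↥(proj x₀ H ⁻¹' {x}))) := by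
  rintro ⟨y, f⟩ hq
  have hy : y ∈ U := hq.1
  obtain ⟨a, ha⟩ := fiber_rep H f
  have hdisc : DiscreteTopology ↥(proj x₀ H ⁻¹' {x}) := fiber_discrete H hU hx
  have hNopen : IsOpen (U ×ˢ ({f} : Set ↥(proj x₀ H ⁻¹' {x}))) :=
    hU.1.prod (isOpen_discrete _)
  have hqN : (y, f) ∈ U ×ˢ ({f} : Set ↥(proj x₀ H ⁻¹' {x})) := ⟨hy, rfl⟩
  apply ContinuousWithinAt.mono_of_mem_nhdsWithin (t := U ×ˢ ({f} : Set _))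
  swap
  · exact mem_nhdsWithin_of_mem_nhds (hNopen.mem_nhds hqN)
  rw [ContinuousWithinAt]
  refine (TopologicalSpace.tendsto_nhds_generateFrom_iff
    (g := {s | ∃ (x' : X) (a' : Path x₀ x') (U' : Set X), IsOpen U' ∧ s = basic H a' U'})).mpr ?_
  rintro s ⟨x', a', V, hV, rfl⟩ hmem
  set δ₀ := pathIn hU.2.1 hx hy with hδ₀
  have he₀ : invF H hU hx (y, f) = mk' H (a.trans δ₀) :=
    invF_eq H hU hx hy f ha δ₀ (pathIn_range hU.2.1 hx hy)
  rw [he₀] at hmem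
  have hbasic : basic H a' V = basic H (a.trans δ₀) V := basic_eq_of_mem H hmem
  have hyV : y ∈ V := by
    have h3 := proj_mem_of_mem_basic H hmem
    rwa [proj_mk] at h3
  set W := pathComponentIn (U ∩ V) y with hWd
  have hWopen : IsOpen W := (hU.1.inter hV).pathComponentIn y
  have hyW : y ∈ W := mem_pathComponentIn_self ⟨hy, hyV⟩
  rw [mem_nhdsWithin]
  refine ⟨W ×ˢ univ, hWopen.prod isOpen_univ, ⟨hyW, trivial⟩, ?_⟩
  rintro ⟨z, g⟩ ⟨⟨hzW, -⟩, -, hgf⟩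
  have hgf' : g = f := hgf
  subst hgf'
  have hj : JoinedIn (U ∩ V) y z := hzW
  set ε := hj.somePath with hε'
  have hε : range ε ⊆ U ∩ V := range_subset_iff.mpr hj.somePath_mem
  have hzU : z ∈ U := (pathComponentIn_subset hzW).1
  have h1 : invF H hU hx (z, g) = mk' H (a.trans (δ₀.trans ε)) := by
    apply invF_eq H hU hx hzU g ha (δ₀.trans ε)
    rw [Path.trans_range]
    exact union_subset (pathIn_range hU.2.1 hx hy) (hε.trans inter_subset_left)
  rw [mem_preimage, hbasic]
  refine ⟨z, ε, hε.trans inter_subset_right, ?_⟩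
  rw [h1]
  exact mk_eq_of_cls H (by simp [cls_trans])

/-- The trivialization of `proj` over a good set `U`. -/
def triv {U : Set X} (hU : Good U) {x : X} (hx : x ∈ U) [LocallyPathConnectedSpace X] :
    Bundle.Trivialization (↥(proj x₀ H ⁻¹' {x})) (proj x₀ H) where
  toFun e := (proj x₀ H e, sF H hU hx e)
  invFun := invF H hU hx
  source := proj x₀ H ⁻¹' U
  target := U ×ˢ univ
  map_source' e he := ⟨he, trivial⟩
  map_target' := by
    rintro ⟨y, f⟩ ⟨hy, -⟩
    obtain ⟨a, ha⟩ := fiber_rep H f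
    have h1 := invF_eq H hU hx hy f ha (pathIn hU.2.1 hx hy) (pathIn_range hU.2.1 hx hy)
    show proj x₀ H _ ∈ U
    rw [h1, proj_mk]
    exact hy
  left_inv' := by
    intro e he
    induction e using Quotient.inductionOn with
    | h A =>
      obtain ⟨y, b⟩ := A
      have hy : y ∈ U := he
      set c := pathIn hU.2.1 hy hx with hc
      have h1 : (sF H hU hx (mk' H b) : Cov x₀ H) = mk' H (b.trans c) :=
        sF_mk H hU hx b hy c (pathIn_range hU.2.1 hy hx)
      show invF H hU hx (proj x₀ H (mk' H b), sF H hU hx (mk' H b)) = mk' H b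
      rw [show proj x₀ H (mk' H b) = y from rfl]
      rw [invF_eq H hU hx hy _ h1 c.symm
        (by rw [Path.symm_range]; exact pathIn_range hU.2.1 hy hx)]
      exact mk_eq_of_cls H (by simp [cls_trans, cls_symm])
  right_inv' := by
    rintro ⟨y, f⟩ ⟨hy, -⟩
    obtain ⟨a, ha⟩ := fiber_rep H f
    set δ := pathIn hU.2.1 hx hy with hδ
    have h1 : invF H hU hx (y, f) = mk' H (a.trans δ) :=
      invF_eq H hU hx hy f ha δ (pathIn_range hU.2.1 hx hy)
    rw [h1]
    refine Prod.ext ?_ ?_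
    · show proj x₀ H (mk' H (a.trans δ)) = y
      rw [proj_mk]
    · show sF H hU hx (mk' H (a.trans δ)) = f
      apply Subtype.ext
      rw [sF_mk H hU hx (a.trans δ) hy δ.symm
        (by rw [Path.symm_range]; exact pathIn_range hU.2.1 hx hy), ha]
      exact mk_eq_of_cls H (by simp [cls_trans, cls_symm])
  open_source := hU.1.preimage (continuous_proj x₀ H)
  open_target := hU.1.prod isOpen_univ
  continuousOn_toFun := ((continuous_proj x₀ H).continuousOn).prodMk (continuousOn_sF H hU hx)
  continuousOn_invFun := continuousOn_invF H hU hx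
  baseSet := U
  open_baseSet := hU.1
  source_eq := rfl
  target_eq := rfl
  proj_toFun e _ := rfl

theorem isCoveringMap_proj [LocallyPathConnectedSpace X]
    (hX : ∀ x : X, ∃ U ∈ nhds x, ∀ γ : Path x x, (∀ t, γ t ∈ U) → γ.Homotopic (Path.refl x)) :
    IsCoveringMap (proj x₀ H) := by
  intro x
  obtain ⟨U, hU, hx, -⟩ := exists_good hX x (Filter.univ_mem (f := nhds x))
  haveI := fiber_discrete H hU hx
  exact IsEvenlyCovered.of_trivialization (t := triv H hU hx) hx

end CovCons
namespace CovCons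
open Set unitInterval
universe u3
variable {X : Type u3} [TopologicalSpace X]
attribute [local instance] Path.Homotopic.setoid
variable {x₀ : X} (H : Subgroup (FundamentalGroup X x₀))

/-- Initial segment of a path, as a path from the start point. -/
def pre {y : X} (b : Path x₀ y) (t : I) : Path x₀ (b t) :=
  (b.truncate 0 t).cast (by rw [min_eq_left t.2.1, Path.extend_zero])
    (b.extend_extends' t).symm

lemma pre_apply {y : X} (b : Path x₀ y) (t u : I) :
    pre b t u = b.extend (min ↑u ↑t) := by
  show b.extend (min (max ↑u 0) ↑t) = _
  rw [max_eq_left u.2.1]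

/-- Middle segment of a path. -/
def seg {v w : X} (b : Path v w) (s t : I) (hst : s ≤ t) : Path (b s) (b t) :=
  (b.truncate s t).cast
    (by rw [min_eq_left (Subtype.coe_le_coe.mpr hst), b.extend_extends' s])
    (b.extend_extends' t).symm

lemma seg_apply {v w : X} (b : Path v w) (s t : I) (hst : s ≤ t) (u : I) :
    seg b s t hst u = b.extend (min (max ↑u ↑s) ↑t) := rfl

lemma seg_range {v w : X} (b : Path v w) {s t : I} (hst : s ≤ t) :
    range (seg b s t hst) ⊆ b.extend '' (Icc ↑s ↑t) := by
  rintro _ ⟨u, rfl⟩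
  rw [seg_apply]
  exact ⟨min (max ↑u ↑s) ↑t, ⟨le_min (le_max_right _ _) (Subtype.coe_le_coe.mpr hst),
    min_le_right _ _⟩, rfl⟩

lemma pre_trans_homotopic {y : X} (b : Path x₀ y) (s t : I) (hst : s ≤ t) :
    (pre b t).Homotopic ((pre b s).trans (seg b s t hst)) := by
  have hst' : (s : ℝ) ≤ t := Subtype.coe_le_coe.mpr hst
  set fR : I → ℝ := fun u => if (u : ℝ) ≤ 1/2 then min (2*u) s else max (2*u-1) s with hfR
  have hmem : ∀ u : I, fR u ∈ I := by
    intro u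
    by_cases h : (u : ℝ) ≤ 1/2 <;> simp only [hfR, h, if_true, if_false]
    · exact ⟨le_min (by nlinarith [u.2.1]) s.2.1, (min_le_right _ _).trans s.2.2⟩
    · exact ⟨le_trans s.2.1 (le_max_right _ _), max_le (by nlinarith [u.2.2]) s.2.2⟩
  set f : I → I := fun u => ⟨fR u, hmem u⟩ with hf
  have hfc : Continuous f := by
    apply Continuous.subtype_mk
    apply Continuous.if_le
    · fun_prop
    · fun_prop
    · exact continuous_subtype_val
    · exact continuous_const
    · intro u hu
      rw [hu]
      norm_num
      rw [min_eq_right s.2.2, max_eq_right s.2.1]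
  have hf0 : f 0 = 0 := by
    apply Subtype.ext
    show fR 0 = 0
    simp only [hfR]
    norm_num
    exact s.2.1
  have hf1 : f 1 = 1 := by
    apply Subtype.ext
    show fR 1 = 1
    simp only [hfR]
    norm_num
    exact s.2.2
  have heq : (pre b s).trans (seg b s t hst) = (pre b t).reparam f hfc hf0 hf1 := by
    ext u
    rw [Path.coe_reparam]
    show ((pre b s).trans (seg b s t hst)) u = (pre b t) (f u)
    rw [Path.trans_apply]
    have hft : (pre b t) (f u) = b.extend (min (fR u) ↑t) := pre_apply b t (f u)
    rw [hft]
    split_ifs with h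
    · rw [pre_apply]
      simp only [hfR, h, if_true]
      congr 1
      rw [min_eq_left ((min_le_right _ _).trans hst')]
    · rw [seg_apply]
      simp only [hfR, h, if_false]
  rw [heq]
  exact ⟨Path.Homotopy.reparam (pre b t) f hfc hf0 hf1⟩

lemma cls_pre_trans {y : X} (b : Path x₀ y) {s t : I} (hst : s ≤ t) :
    cls (pre b t) = cls (pre b s) ≫ cls (seg b s t hst) := by
  rw [← cls_trans]
  exact cls_homotopic (pre_trans_homotopic b s t hst)

lemma lift_zero {y : X} (b : Path x₀ y) : mk' H (pre b 0) = mk' H (Path.refl x₀) := by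
  apply sound' H _ _ b.source
  have hpe : pre b 0 = (Path.refl x₀).cast rfl b.source := by
    ext u
    show b.extend (min (max ↑u 0) 0) = x₀
    rw [min_eq_right (le_max_right _ _), Path.extend_zero]
  rw [hpe]

lemma lift_one {y : X} (b : Path x₀ y) : mk' H (pre b 1) = mk' H b := by
  apply sound' H _ _ b.target
  have hpe : pre b 1 = b.cast rfl b.target := by
    ext u
    show b.extend (min (max ↑u 0) 1) = b u
    rw [max_eq_left u.2.1, min_eq_left u.2.2, b.extend_extends' u]
  rw [hpe]

lemma continuous_lift {y : X} (b : Path x₀ y) :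
    Continuous (fun t : I => mk' H (pre b t)) := by
  apply continuous_generateFrom_iff.mpr
  rintro s ⟨x', a, U, hU, rfl⟩
  rw [Metric.isOpen_iff]
  intro t₀ ht₀
  rw [mem_preimage] at ht₀
  have hbU : basic H a U = basic H (pre b t₀) U := basic_eq_of_mem H ht₀
  have hmem : b t₀ ∈ U := by
    have h3 := proj_mem_of_mem_basic H ht₀
    rwa [proj_mk] at h3
  have hopen : IsOpen ((b : I → X) ⁻¹' U) := hU.preimage b.continuous_toFun
  obtain ⟨ε, hε, hball⟩ := Metric.isOpen_iff.mp hopen t₀ hmem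
  refine ⟨ε, hε, ?_⟩
  intro u hu
  rw [Metric.mem_ball, Subtype.dist_eq, Real.dist_eq] at hu
  rw [mem_preimage, hbU]
  rcases le_total t₀ u with h | h
  · refine ⟨b u, seg b t₀ u h, ?_, mk_eq_of_cls H (cls_pre_trans b h)⟩
    refine (seg_range b h).trans ?_
    rintro _ ⟨r, hr, rfl⟩
    have h0 : 0 ≤ r := le_trans t₀.2.1 hr.1
    have h1 : r ≤ 1 := le_trans hr.2 u.2.2
    rw [Path.extend_apply b ⟨h0, h1⟩]
    apply hball
    rw [Metric.mem_ball, Subtype.dist_eq, Real.dist_eq]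
    have hcoe : (t₀ : ℝ) ≤ u := Subtype.coe_le_coe.mpr h
    have habs : |r - (t₀ : ℝ)| ≤ |(u : ℝ) - t₀| := by
      rw [abs_of_nonneg (by linarith [hr.1]), abs_of_nonneg (by linarith)]
      linarith [hr.2]
    exact lt_of_le_of_lt habs hu
  · refine ⟨b u, (seg b u t₀ h).symm, ?_, ?_⟩
    · rw [Path.symm_range]
      refine (seg_range b h).trans ?_
      rintro _ ⟨r, hr, rfl⟩
      have h0 : 0 ≤ r := le_trans u.2.1 hr.1
      have h1 : r ≤ 1 := le_trans hr.2 t₀.2.2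
      rw [Path.extend_apply b ⟨h0, h1⟩]
      apply hball
      rw [Metric.mem_ball, Subtype.dist_eq, Real.dist_eq]
      have hcoe : (u : ℝ) ≤ t₀ := Subtype.coe_le_coe.mpr h
      have habs : |r - (t₀ : ℝ)| ≤ |(u : ℝ) - t₀| := by
        rw [abs_of_nonpos (by linarith [hr.2]), abs_of_nonpos (by linarith)]
        linarith [hr.1]
      exact lt_of_le_of_lt habs hu
    · apply mk_eq_of_cls
      rw [cls_trans, cls_symm, cls_pre_trans b h]
      simp

lemma pathConnectedSpace_cov : PathConnectedSpace (Cov x₀ H) := by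
  have key : ∀ e : Cov x₀ H, Joined (mk' H (Path.refl x₀)) e := by
    intro e
    induction e using Quotient.inductionOn with
    | h A =>
      obtain ⟨y, b⟩ := A
      exact ⟨⟨⟨fun t => mk' H (pre b t), continuous_lift H b⟩, lift_zero H b, lift_one H b⟩⟩
  exact ⟨⟨mk' H (Path.refl x₀)⟩, fun e e' => (key e).symm.trans (key e')⟩

end CovCons
namespace CovCons
open Set
universe u4
attribute [local instance] Path.Homotopic.setoid

lemma inducedHom_fromLoop {Y Z : Type u4} [TopologicalSpace Y] [TopologicalSpace Z]
    (f : C(Y, Z)) (y₀ : Y) (ℓ : Path y₀ y₀) :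
    FundamentalGroup.inducedHom f y₀ (f y₀) rfl (FundamentalGroup.fromLoop ℓ) =
      FundamentalGroup.fromLoop (ℓ.map f.continuous) := by
  show (CategoryTheory.eqToIso
      (rfl : (FundamentalGroupoid.fundamentalGroupoidFunctor.map
        (TopCat.ofHom f)).obj ⟨y₀⟩ = ⟨f y₀⟩)).conj
      ((CategoryTheory.Functor.mapEnd ⟨y₀⟩
        (FundamentalGroupoid.fundamentalGroupoidFunctor.map (TopCat.ofHom f)))
        (FundamentalGroup.fromLoop ℓ))
    = FundamentalGroup.fromLoop (ℓ.map f.continuous)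
  rw [eqToIso_refl, Iso.refl_conj]
  show (FundamentalGroupoid.fundamentalGroupoidFunctor.map
      (TopCat.ofHom f)).map (FundamentalGroup.fromLoop ℓ) = _
  rw [fromLoop_hom, fromLoop_hom]
  exact (Path.Homotopic.Quotient.mk_map ℓ f).symm

end CovCons

open CovCons

/-- **Existence half of the classification of covering spaces.** If `X` is path-connected,
locally path-connected and semilocally simply connected (every point has a neighbourhood `U`
such that every loop contained in `U` based at it is null-homotopic in `X`), then every
subgroup `H` of `π₁(X, x₀)` is the image of `p⁎ : π₁(E, e₀) →* π₁(X, x₀)` for some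
path-connected covering space `p : E → X` with `p e₀ = x₀`. -/
theorem exists_covering_with_range_eq {X : Type u} [TopologicalSpace X] [PathConnectedSpace X]
    [LocallyPathConnectedSpace X]
    (hX : ∀ x : X, ∃ U ∈ nhds x, ∀ γ : Path x x, (∀ t, γ t ∈ U) → γ.Homotopic (Path.refl x))
    (x₀ : X) (H : Subgroup (FundamentalGroup X x₀)) :
    ∃ (E : Type u) (_ : TopologicalSpace E) (p : E → X) (e₀ : E) (hp : IsCoveringMap p)
      (_ : PathConnectedSpace E) (he : p e₀ = x₀),
      (FundamentalGroup.inducedHom ⟨p, hp.continuous⟩ e₀ x₀ he).range = H := by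
  classical
  have hp : IsCoveringMap (proj x₀ H) := isCoveringMap_proj H hX
  set e₀ : Cov x₀ H := mk' H (Path.refl x₀) with he₀
  refine ⟨Cov x₀ H, inferInstance, proj x₀ H, e₀, hp, pathConnectedSpace_cov H, rfl, ?_⟩
  set f : C(Cov x₀ H, X) := ⟨proj x₀ H, hp.continuous⟩ with hf
  show (FundamentalGroup.inducedHom f e₀ (f e₀) rfl).range = H
  ext g
  simp only [MonoidHom.mem_range]
  constructor
  · rintro ⟨k, hk⟩
    obtain ⟨ℓ, rfl⟩ := exists_fromLoop k
    rw [inducedHom_fromLoop f e₀ ℓ] at hk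
    set γ' : Path x₀ x₀ := ℓ.map f.continuous with hγ'
    have hfun : ⇑ℓ = fun t => mk' H (pre γ' t) := by
      refine hp.eq_of_comp_eq ℓ.continuous_toFun (continuous_lift H γ') ?_ 0 ?_
      · funext t
        rfl
      · show ℓ 0 = mk' H (pre γ' 0)
        exact (ℓ.source.trans he₀).trans (lift_zero H γ').symm
    have h5 : mk' H γ' = mk' H (Path.refl x₀) := by
      rw [← lift_one H γ', ← congrFun hfun 1, ℓ.target]
    have h6 := (mk_eq_mk H).mp h5
    have h7 : FundamentalGroup.fromLoop (γ'.trans (Path.refl x₀).symm)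
        = FundamentalGroup.fromLoop γ' :=
      fromLoop_eq_iff.mpr (by simp [cls_trans, cls_symm, cls_refl])
    rw [h7] at h6
    rw [← hk]
    exact h6
  · intro hg
    obtain ⟨γ, hγ⟩ := exists_fromLoop (X := X) (x := x₀) g
    have h7 : FundamentalGroup.fromLoop (γ.trans (Path.refl x₀).symm)
        = FundamentalGroup.fromLoop γ :=
      fromLoop_eq_iff.mpr (by simp [cls_trans, cls_symm, cls_refl])
    have hmk : mk' H γ = mk' H (Path.refl x₀) := by
      rw [mk_eq_mk H, h7, ← hγ]
      exact hg
    set L : Path e₀ e₀ :=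
      ⟨⟨fun t => mk' H (pre γ t), continuous_lift H γ⟩,
        by rw [he₀]; exact lift_zero H γ, by rw [he₀]; exact (lift_one H γ).trans hmk⟩ with hL
    refine ⟨FundamentalGroup.fromLoop L, ?_⟩
    rw [inducedHom_fromLoop f e₀ L]
    have hLγ : L.map f.continuous = γ := by
      ext t
      rfl
    rw [hγ]
    exact congrArg FundamentalGroup.fromLoop hLγ
end
end

section
/- Let X be a path-connected, simply connected topological space, let x₀ ∈ X, let n ≥ 1, and let Sⁿ denote the unit sphere in (n+1)-dimensional Euclidean space with a fixed basepoint b. If f, g : Sⁿ → X are continuous maps with f(b) = g(b) = x₀ that are (freely) homotopic, then f and g are homotopic relative to {b}. -/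
open scoped RealInnerProductSpace

noncomputable section SphereShrink

namespace SphereShrink

variable {E : Type*} [NormedAddCommGroup E] [InnerProductSpace ℝ E]

/-- auxiliary reparametrization of the cosine coordinate -/
def psi (c s : ℝ) : ℝ := min 1 (c + s * (1 + c))

lemma psi_le_one (c s : ℝ) : psi c s ≤ 1 := min_le_left _ _

lemma le_psi {c : ℝ} (hc : c ≤ 1) {s : ℝ} (hs : 0 ≤ s) (hc1 : -1 ≤ c) : c ≤ psi c s :=
  le_min hc (by nlinarith)

lemma neg_one_le_psi {c : ℝ} (hc1 : -1 ≤ c) {s : ℝ} (hs : 0 ≤ s) : -1 ≤ psi c s :=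
  le_min (by norm_num) (by nlinarith)

lemma psi_le {c : ℝ} (hc1 : -1 ≤ c) {s : ℝ} (hs : s ≤ 1) : psi c s ≤ 2 * c + 1 :=
  (min_le_right _ _).trans (by nlinarith)

lemma psi_zero {c : ℝ} (hc : c ≤ 1) : psi c 0 = c := by simp [psi, hc]

lemma psi_one {c : ℝ} (hc : 0 ≤ c) : psi c 1 = 1 := by
  simp only [psi]; rw [min_eq_left]; nlinarith

lemma psi_of_one {s : ℝ} (hs : 0 ≤ s) : psi 1 s = 1 := by
  simp only [psi]; rw [min_eq_left]; nlinarith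

lemma psi_neg_one (s : ℝ) : psi (-1) s = -1 := by norm_num [psi]

/-- The cap-shrinking deformation of the unit sphere toward `b`. -/
def Tmap (b x : E) (s : ℝ) : E :=
  psi ⟪x, b⟫ s • b +
    (Real.sqrt (1 - psi ⟪x, b⟫ s ^ 2) / Real.sqrt (1 - ⟪x, b⟫ ^ 2)) • (x - ⟪x, b⟫ • b)

variable {b x : E} (hb : ‖b‖ = 1) (hx : ‖x‖ = 1)

section
include hb hx

lemma abs_inner_le : |⟪x, b⟫| ≤ 1 := by
  have := abs_real_inner_le_norm x b; rwa [hx, hb, one_mul] at this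

lemma norm_w_sq : ‖x - ⟪x, b⟫ • b‖ ^ 2 = 1 - ⟪x, b⟫ ^ 2 := by
  rw [norm_sub_sq_real, real_inner_smul_right, norm_smul, hx, hb]
  rw [Real.norm_eq_abs, mul_one, sq_abs]
  ring

lemma eq_of_inner_eq_one (h : ⟪x, b⟫ = 1) : x = b := by
  have h2 : ‖x - b‖ ^ 2 = 0 := by rw [norm_sub_sq_real, hx, hb, h]; ring
  have := pow_eq_zero_iff (n := 2) (by norm_num) |>.1 h2
  rwa [norm_eq_zero, sub_eq_zero] at this

lemma eq_of_inner_eq_neg_one (h : ⟪x, b⟫ = -1) : x = -b := by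
  have h2 : ‖x + b‖ ^ 2 = 0 := by rw [norm_add_sq_real, hx, hb, h]; ring
  have := pow_eq_zero_iff (n := 2) (by norm_num) |>.1 h2
  rw [norm_eq_zero] at this
  exact eq_neg_of_add_eq_zero_left this

end

section
include hb

lemma inner_b_w : ⟪b, x - ⟪x, b⟫ • b⟫ = 0 := by
  rw [inner_sub_right, real_inner_smul_right, real_inner_self_eq_norm_sq, hb,
    real_inner_comm]
  ring

lemma Tmap_inner (s : ℝ) : ⟪Tmap b x s, b⟫ = psi ⟪x, b⟫ s := by
  rw [Tmap, inner_add_left, real_inner_smul_left, real_inner_smul_left,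
    real_inner_self_eq_norm_sq, hb, real_inner_comm b (x - ⟪x, b⟫ • b), inner_b_w hb]
  ring

end

section
include hb hx

lemma Tmap_norm {s : ℝ} (hs : 0 ≤ s) : ‖Tmap b x s‖ = 1 := by
  set c := ⟪x, b⟫ with hc
  have habs : |c| ≤ 1 := abs_inner_le hb hx
  have hc1 : c ≤ 1 := (abs_le.1 habs).2
  have hcm : -1 ≤ c := (abs_le.1 habs).1
  have hpsi1 : psi c s ≤ 1 := psi_le_one c s
  have hpsim : -1 ≤ psi c s := neg_one_le_psi hcm hs
  rcases eq_or_lt_of_le (abs_le.1 habs).2 with h1 | h1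
  · -- c = 1, x = b
    have hxb : x = b := eq_of_inner_eq_one hb hx h1
    have hps : psi c s = 1 := by rw [h1]; exact psi_of_one hs
    rw [Tmap, ← hc, hps, h1, hxb]
    simp [hb]
  rcases eq_or_lt_of_le hcm with h2 | h2
  · -- c = -1, x = -b
    have hxb : x = -b := eq_of_inner_eq_neg_one hb hx h2.symm
    rw [Tmap, ← hc, ← h2, psi_neg_one, hxb]
    simp [hb]
  -- generic case
  have hden : (0:ℝ) < 1 - c ^ 2 := by nlinarith
  have hw : ‖x - c • b‖ ^ 2 = 1 - c ^ 2 := norm_w_sq hb hx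
  have horth : ⟪b, x - c • b⟫ = 0 := inner_b_w hb
  have hnum : (0:ℝ) ≤ 1 - psi c s ^ 2 := by nlinarith [psi_le_one c s]
  have key : ‖Tmap b x s‖ ^ 2 = 1 := by
    rw [Tmap, ← hc, norm_add_sq_real, real_inner_smul_left, real_inner_smul_right, horth,
      norm_smul, norm_smul, hb]
    rw [Real.norm_eq_abs, Real.norm_eq_abs, mul_pow, mul_pow, sq_abs, sq_abs, hw]
    rw [div_pow, Real.sq_sqrt hnum, Real.sq_sqrt hden.le]
    field_simp
    ring
  have h0 : 0 ≤ ‖Tmap b x s‖ := norm_nonneg _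
  nlinarith [key]

lemma Tmap_zero : Tmap b x 0 = x := by
  set c := ⟪x, b⟫ with hc
  have habs : |c| ≤ 1 := abs_inner_le hb hx
  have hc1 : c ≤ 1 := (abs_le.1 habs).2
  have hcm : -1 ≤ c := (abs_le.1 habs).1
  rw [Tmap, ← hc, psi_zero hc1]
  rcases eq_or_lt_of_le hc1 with h1 | h1
  · have hxb : x = b := eq_of_inner_eq_one hb hx h1
    rw [h1, hxb]; simp
  rcases eq_or_lt_of_le hcm with h2 | h2
  · have hxb : x = -b := eq_of_inner_eq_neg_one hb hx h2.symm
    rw [← h2, hxb]; simp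
  have hden : (0:ℝ) < 1 - c ^ 2 := by nlinarith
  rw [div_self (by positivity : Real.sqrt (1 - c ^ 2) ≠ 0)]
  simp

lemma Tmap_one_of_nonneg (h : 0 ≤ ⟪x, b⟫) : Tmap b x 1 = b := by
  rw [Tmap, psi_one h]
  simp

lemma dist_Tmap_b {s : ℝ} (hs : 0 ≤ s) : ‖Tmap b x s - b‖ ≤ ‖x - b‖ := by
  set c := ⟪x, b⟫ with hc
  have habs : |c| ≤ 1 := abs_inner_le hb hx
  have h1 : ‖Tmap b x s - b‖ ^ 2 = 2 - 2 * psi c s := by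
    rw [norm_sub_sq_real, Tmap_norm hb hx hs, Tmap_inner hb, hb]; ring
  have h2 : ‖x - b‖ ^ 2 = 2 - 2 * c := by
    rw [norm_sub_sq_real, hx, hb, ← hc]; ring
  have hle : ‖Tmap b x s - b‖ ^ 2 ≤ ‖x - b‖ ^ 2 := by
    rw [h1, h2]
    have := le_psi (abs_le.1 habs).2 hs (abs_le.1 habs).1
    linarith
  calc ‖Tmap b x s - b‖ = Real.sqrt (‖Tmap b x s - b‖ ^ 2) := (Real.sqrt_sq (norm_nonneg _)).symm
    _ ≤ Real.sqrt (‖x - b‖ ^ 2) := Real.sqrt_le_sqrt hle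
    _ = ‖x - b‖ := Real.sqrt_sq (norm_nonneg _)

lemma dist_Tmap_negb {s : ℝ} (hs : 0 ≤ s) (hs1 : s ≤ 1) :
    ‖Tmap b x s + b‖ ≤ Real.sqrt 2 * ‖x + b‖ := by
  set c := ⟪x, b⟫ with hc
  have habs : |c| ≤ 1 := abs_inner_le hb hx
  have h1 : ‖Tmap b x s + b‖ ^ 2 = 2 + 2 * psi c s := by
    rw [norm_add_sq_real, Tmap_norm hb hx hs, Tmap_inner hb, hb]; ring
  have h2 : ‖x + b‖ ^ 2 = 2 + 2 * c := by
    rw [norm_add_sq_real, hx, hb, ← hc]; ring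
  have hle : ‖Tmap b x s + b‖ ^ 2 ≤ 2 * ‖x + b‖ ^ 2 := by
    rw [h1, h2]
    have := psi_le (abs_le.1 habs).1 hs1 (c := c)
    linarith
  calc ‖Tmap b x s + b‖ = Real.sqrt (‖Tmap b x s + b‖ ^ 2) := (Real.sqrt_sq (norm_nonneg _)).symm
    _ ≤ Real.sqrt (2 * ‖x + b‖ ^ 2) := Real.sqrt_le_sqrt hle
    _ = Real.sqrt 2 * ‖x + b‖ := by
        rw [Real.sqrt_mul (by norm_num), Real.sqrt_sq (norm_nonneg _)]

end

lemma Tmap_self (hb : ‖b‖ = 1) {s : ℝ} (hs : 0 ≤ s) : Tmap b b s = b := by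
  have h1 : ⟪b, b⟫ = (1:ℝ) := by rw [real_inner_self_eq_norm_sq, hb]; norm_num
  rw [Tmap, h1, psi_of_one hs]; simp

lemma continuous_Tmap_sphere (hb : ‖b‖ = 1) :
    Continuous (fun p : Metric.sphere (0:E) 1 × unitInterval =>
      Tmap b (p.1 : E) (p.2 : ℝ)) := by
  rw [continuous_iff_continuousAt]
  rintro ⟨x₀, s₀⟩
  have hx0 : ‖(x₀ : E)‖ = 1 := mem_sphere_zero_iff_norm.1 x₀.2
  have hnormall : ∀ p : Metric.sphere (0:E) 1 × unitInterval, ‖(p.1 : E)‖ = 1 :=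
    fun p => mem_sphere_zero_iff_norm.1 p.1.2
  have habs : |⟪(x₀:E), b⟫| ≤ 1 := abs_inner_le hb hx0
  have hincl : Continuous (fun p : Metric.sphere (0:E) 1 × unitInterval =>
      ((p.1 : E), (p.2 : ℝ))) :=
    (continuous_subtype_val.comp continuous_fst).prodMk
      ((continuous_subtype_val.comp continuous_snd))
  rcases eq_or_lt_of_le (abs_le.1 habs).2 with h1 | h1
  · -- x₀ = b
    have hxb : (x₀ : E) = b := eq_of_inner_eq_one hb hx0 h1
    have hval : Tmap b (x₀ : E) (s₀ : ℝ) = b := by rw [hxb]; exact Tmap_self hb s₀.2.1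
    unfold ContinuousAt
    rw [show (fun p : Metric.sphere (0:E) 1 × unitInterval => Tmap b (p.1 : E) (p.2 : ℝ))
        (x₀, s₀) = b from hval, tendsto_iff_dist_tendsto_zero]
    apply squeeze_zero (g := fun p : Metric.sphere (0:E) 1 × unitInterval =>
      dist ((p.1 : E)) b) (fun t => dist_nonneg)
    · intro p
      rw [dist_eq_norm, dist_eq_norm]
      exact dist_Tmap_b hb (hnormall p) p.2.2.1
    · have hg : Continuous (fun p : Metric.sphere (0:E) 1 × unitInterval =>
          dist ((p.1 : E)) b) := (continuous_subtype_val.comp continuous_fst).dist continuous_const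
      have := hg.continuousAt (x := (x₀, s₀))
      rwa [ContinuousAt, show dist ((x₀:E)) b = 0 by rw [hxb, dist_self]] at this
  rcases eq_or_lt_of_le (abs_le.1 habs).1 with h2 | h2
  · -- x₀ = -b
    have hxb : (x₀ : E) = -b := eq_of_inner_eq_neg_one hb hx0 h2.symm
    have hval : Tmap b (x₀ : E) (s₀ : ℝ) = -b := by
      rw [Tmap, hxb]
      have hinb : ⟪-b, b⟫ = (-1:ℝ) := by
        rw [inner_neg_left, real_inner_self_eq_norm_sq, hb]; norm_num
      rw [hinb, psi_neg_one]
      simp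
    unfold ContinuousAt
    rw [show (fun p : Metric.sphere (0:E) 1 × unitInterval => Tmap b (p.1 : E) (p.2 : ℝ))
        (x₀, s₀) = -b from hval, tendsto_iff_dist_tendsto_zero]
    apply squeeze_zero (g := fun p : Metric.sphere (0:E) 1 × unitInterval =>
      Real.sqrt 2 * dist ((p.1 : E)) (-b)) (fun t => dist_nonneg)
    · intro p
      rw [dist_eq_norm, dist_eq_norm, sub_neg_eq_add, sub_neg_eq_add]
      exact dist_Tmap_negb hb (hnormall p) p.2.2.1 p.2.2.2
    · have hg : Continuous (fun p : Metric.sphere (0:E) 1 × unitInterval =>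
          Real.sqrt 2 * dist ((p.1 : E)) (-b)) :=
        continuous_const.mul ((continuous_subtype_val.comp continuous_fst).dist continuous_const)
      have := hg.continuousAt (x := (x₀, s₀))
      rwa [ContinuousAt, show Real.sqrt 2 * dist ((x₀:E)) (-b) = 0 by
        rw [hxb, dist_self, mul_zero]] at this
  -- generic case: |⟪x₀,b⟫| < 1
  have hci : Continuous (fun q : E × ℝ => ⟪q.1, b⟫) := continuous_fst.inner continuous_const
  have hpsic : Continuous (fun q : E × ℝ => psi ⟪q.1, b⟫ q.2) :=
    continuous_const.min (hci.add (continuous_snd.mul (continuous_const.add hci)))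
  have hdenpos : (0:ℝ) < 1 - ⟪(x₀:E), b⟫ ^ 2 := by nlinarith [sq_abs ⟪(x₀:E), b⟫]
  have hne : Real.sqrt (1 - ⟪(x₀:E), b⟫ ^ 2) ≠ 0 := by positivity
  have hG : ContinuousAt (fun q : E × ℝ => psi ⟪q.1, b⟫ q.2 • b +
      (Real.sqrt (1 - psi ⟪q.1, b⟫ q.2 ^ 2) / Real.sqrt (1 - ⟪q.1, b⟫ ^ 2)) •
        (q.1 - ⟪q.1, b⟫ • b)) ((x₀ : E), (s₀ : ℝ)) := by
    apply ContinuousAt.add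
    · exact (hpsic.smul continuous_const).continuousAt
    · apply ContinuousAt.smul
      · apply ContinuousAt.div
        · exact (Real.continuous_sqrt.comp
            (continuous_const.sub (hpsic.pow 2))).continuousAt
        · exact (Real.continuous_sqrt.comp
            (continuous_const.sub (hci.pow 2))).continuousAt
        · exact hne
      · exact (continuous_fst.sub (hci.smul continuous_const)).continuousAt
  show ContinuousAt ((fun q : E × ℝ => psi ⟪q.1, b⟫ q.2 • b +
      (Real.sqrt (1 - psi ⟪q.1, b⟫ q.2 ^ 2) / Real.sqrt (1 - ⟪q.1, b⟫ ^ 2)) •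
        (q.1 - ⟪q.1, b⟫ • b)) ∘ (fun p : Metric.sphere (0:E) 1 × unitInterval =>
          ((p.1 : E), (p.2 : ℝ)))) (x₀, s₀)
  exact ContinuousAt.comp (x := (x₀, s₀))
    (f := fun p : Metric.sphere (0:E) 1 × unitInterval => ((p.1 : E), (p.2 : ℝ)))
    hG hincl.continuousAt

end SphereShrink

end SphereShrink

/-- The unit sphere in `ℝ^{n+1}`, as a topological space. -/
abbrev UnitSphere (n : ℕ) : Type :=
  Metric.sphere (0 : EuclideanSpace ℝ (Fin (n + 1))) 1

open SphereShrink in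
/-- If `X` is path-connected and simply connected, then any two freely homotopic based maps
`f, g : Sⁿ → X` (with `f b = g b = x₀`) are homotopic rel the basepoint `b`. -/
theorem homotopicRel_of_homotopic_of_simplyConnected {X : Type*} [TopologicalSpace X]
    [PathConnectedSpace X] [SimplyConnectedSpace X] (x₀ : X) (n : ℕ) (hn : 1 ≤ n)
    (b : UnitSphere n) (f g : C(UnitSphere n, X)) (hf : f b = x₀) (hg : g b = x₀)
    (h : f.Homotopic g) : f.HomotopicRel g {b} := by
  classical
  obtain ⟨H⟩ := h
  have hb : ‖(b : EuclideanSpace ℝ (Fin (n + 1)))‖ = 1 := mem_sphere_zero_iff_norm.1 b.2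
  have hnorm : ∀ x : UnitSphere n, ‖(x : EuclideanSpace ℝ (Fin (n + 1)))‖ = 1 :=
    fun x => mem_sphere_zero_iff_norm.1 x.2
  -- the shrinking deformation, as a map into the sphere
  let sh : UnitSphere n × unitInterval → UnitSphere n := fun p =>
    ⟨Tmap (b : EuclideanSpace ℝ (Fin (n + 1))) (p.1 : EuclideanSpace ℝ (Fin (n + 1))) (p.2 : ℝ),
      mem_sphere_zero_iff_norm.2 (Tmap_norm hb (hnorm p.1) p.2.2.1)⟩
  have hshc : Continuous sh := (continuous_Tmap_sphere hb).subtype_mk _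
  let c1 : C(UnitSphere n, UnitSphere n) :=
    ⟨fun x => sh (x, 1), hshc.comp (continuous_id.prodMk continuous_const)⟩
  have hsh0 : ∀ x : UnitSphere n, sh (x, 0) = x :=
    fun x => Subtype.ext (Tmap_zero hb (hnorm x))
  have hshb : ∀ s : unitInterval, sh (b, s) = b :=
    fun s => Subtype.ext (Tmap_self hb s.2.1)
  have hc1 : ∀ x : UnitSphere n,
      0 ≤ ⟪(x : EuclideanSpace ℝ (Fin (n + 1))), (b : EuclideanSpace ℝ (Fin (n + 1)))⟫ →
      c1 x = b := fun x hx => Subtype.ext (Tmap_one_of_nonneg hb (hnorm x) hx)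
  have hinnerb : ⟪(b : EuclideanSpace ℝ (Fin (n + 1))), (b : EuclideanSpace ℝ (Fin (n + 1)))⟫
      = (1:ℝ) := by rw [real_inner_self_eq_norm_sq, hb]; norm_num
  -- the trace loop and its nullhomotopy
  let γ : Path x₀ x₀ :=
    { toFun := fun t => H (t, b)
      continuous_toFun := H.continuous.comp (continuous_id.prodMk continuous_const)
      source' := by simp [hf]
      target' := by simp [hg] }
  obtain ⟨K⟩ := SimplyConnectedSpace.paths_homotopic γ (Path.refl x₀)
  -- clamped inner product, used as the nullhomotopy parameter near the basepoint
  let u : UnitSphere n → unitInterval := fun x =>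
    Set.projIcc (0:ℝ) 1 zero_le_one
      ⟪(x : EuclideanSpace ℝ (Fin (n + 1))), (b : EuclideanSpace ℝ (Fin (n + 1)))⟫
  have hu_cont : Continuous u :=
    continuous_projIcc.comp ((continuous_subtype_val).inner continuous_const)
  have hu0 : ∀ x : UnitSphere n,
      ⟪(x : EuclideanSpace ℝ (Fin (n + 1))), (b : EuclideanSpace ℝ (Fin (n + 1)))⟫ = (0:ℝ) →
      u x = 0 := by
    intro x hx
    simp only [u, hx]
    rw [Set.projIcc_left]
    rfl
  have hub : u b = 1 := by
    simp only [u, hinnerb]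
    rw [Set.projIcc_right]
    rfl
  -- Homotopy A : f ≃ f ∘ c1 rel {b}
  let A : f.HomotopyRel (f.comp c1) {b} :=
    { toFun := fun p => f (sh (p.2, p.1))
      continuous_toFun := f.continuous.comp (hshc.comp (continuous_snd.prodMk continuous_fst))
      map_zero_left := fun x => by show f (sh (x, 0)) = f x; rw [hsh0]
      map_one_left := fun x => rfl
      prop' := fun t y hy => by
        have hyb : y = b := hy
        show f (sh (y, t)) = f y
        rw [hyb, hshb] }
  let A' : g.HomotopyRel (g.comp c1) {b} :=
    { toFun := fun p => g (sh (p.2, p.1))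
      continuous_toFun := g.continuous.comp (hshc.comp (continuous_snd.prodMk continuous_fst))
      map_zero_left := fun x => by show g (sh (x, 0)) = g x; rw [hsh0]
      map_one_left := fun x => rfl
      prop' := fun t y hy => by
        have hyb : y = b := hy
        show g (sh (y, t)) = g y
        rw [hyb, hshb] }
  -- Homotopy B : f ∘ c1 ≃ g ∘ c1 rel {b}
  let B : (f.comp c1).HomotopyRel (g.comp c1) {b} :=
    { toFun := fun p =>
        if ⟪(p.2 : EuclideanSpace ℝ (Fin (n + 1))), (b : EuclideanSpace ℝ (Fin (n + 1)))⟫ ≤ 0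
        then H (p.1, c1 p.2) else K (u p.2, p.1)
      continuous_toFun := by
        apply Continuous.if_le
        · exact H.continuous.comp (continuous_fst.prodMk (c1.continuous.comp continuous_snd))
        · exact K.continuous.comp ((hu_cont.comp continuous_snd).prodMk continuous_fst)
        · exact ((continuous_subtype_val.comp continuous_snd).inner continuous_const)
        · exact continuous_const
        · intro p hp
          rw [hc1 p.2 (le_of_eq hp.symm), hu0 p.2 hp]
          show H (p.1, b) = K (0, p.1)
          rw [K.apply_zero]
          rfl
      map_zero_left := fun x => by
        show (if ⟪(x : EuclideanSpace ℝ (Fin (n + 1))), (b : EuclideanSpace ℝ (Fin (n + 1)))⟫ ≤ 0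
          then H (0, c1 x) else K (u x, 0)) = (f.comp c1) x
        split_ifs with hc
        · rw [H.apply_zero]; rfl
        · rw [Path.Homotopy.source K (u x)]
          rw [ContinuousMap.comp_apply, hc1 x (le_of_lt (lt_of_not_ge hc)), hf]
      map_one_left := fun x => by
        show (if ⟪(x : EuclideanSpace ℝ (Fin (n + 1))), (b : EuclideanSpace ℝ (Fin (n + 1)))⟫ ≤ 0
          then H (1, c1 x) else K (u x, 1)) = (g.comp c1) x
        split_ifs with hc
        · rw [H.apply_one]; rfl
        · rw [Path.Homotopy.target K (u x)]
          rw [ContinuousMap.comp_apply, hc1 x (le_of_lt (lt_of_not_ge hc)), hg]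
      prop' := fun t y hy => by
        have hyb : y = b := hy
        show (if ⟪(y : EuclideanSpace ℝ (Fin (n + 1))), (b : EuclideanSpace ℝ (Fin (n + 1)))⟫ ≤ 0
          then H (t, c1 y) else K (u y, t)) = (f.comp c1) y
        rw [hyb, if_neg (by rw [hinnerb]; norm_num), hub, K.apply_one]
        show (Path.refl x₀) t = (f.comp c1) b
        rw [Path.refl_apply, ContinuousMap.comp_apply, hc1 b (by rw [hinnerb]; norm_num), hf] }
  exact ContinuousMap.HomotopicRel.trans ⟨A⟩
    (ContinuousMap.HomotopicRel.trans ⟨B⟩ (ContinuousMap.HomotopicRel.symm ⟨A'⟩))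
end

section
/- Let X be a topological space, x₀ ∈ X, and let Ω = Path(x₀, x₀) denote the space of loops at x₀ with its natural topology. Suppose the two continuous concatenation maps c, c' : Ω × Ω → Ω given by c(α, β) = α · β and c'(α, β) = β · α are homotopic as continuous maps. Then for every n ≥ 1, any two continuous maps f, g : Sⁿ → X with f(b) = g(b) = x₀ that are (freely) homotopic are homotopic relative to {b}, where Sⁿ is the unit sphere in ℝ^{n+1} with fixed basepoint b. -/
/-- Concatenation `(α, β) ↦ α ⬝ β` on the loop space at `x₀`, as a continuous map. -/
noncomputable def loopConcat {X : Type*} [TopologicalSpace X] (x₀ : X) :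
    C(Path x₀ x₀ × Path x₀ x₀, Path x₀ x₀) :=
  ⟨fun q => q.1.trans q.2, Continuous.path_trans continuous_fst continuous_snd⟩

/-- Reversed concatenation `(α, β) ↦ β ⬝ α` on the loop space at `x₀`, as a continuous map. -/
noncomputable def loopConcatSwap {X : Type*} [TopologicalSpace X] (x₀ : X) :
    C(Path x₀ x₀ × Path x₀ x₀, Path x₀ x₀) :=
  ⟨fun q => q.2.trans q.1, Continuous.path_trans continuous_snd continuous_fst⟩

open scoped unitInterval InnerProductSpace

section PathHelpers

variable {X : Type*} [TopologicalSpace X] {x y z : X}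

theorem transExtend (p : Path x y) (q : Path y z) (s : ℝ) :
    (p.trans q).extend s = if s ≤ 1 / 2 then p.extend (2 * s) else q.extend (2 * s - 1) := by
  rcases le_or_gt s 0 with h0 | h0
  · rw [Path.extend_of_le_zero _ h0, if_pos (by linarith), Path.extend_of_le_zero _ (by linarith)]
  rcases le_or_gt 1 s with h1 | h1
  · rw [Path.extend_of_one_le _ h1, if_neg (by push_neg; linarith),
      Path.extend_of_one_le _ (by linarith)]
  rw [Path.extend_apply _ ⟨h0.le, h1.le⟩, Path.trans_apply]
  split_ifs with h
  · rw [Path.extend_apply]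
  · rw [Path.extend_apply]

theorem symmExtend (p : Path x y) (s : ℝ) : p.symm.extend s = p.extend (1 - s) := by
  rcases le_or_gt s 0 with h0 | h0
  · rw [Path.extend_of_le_zero _ h0, Path.extend_of_one_le _ (by linarith)]
  rcases le_or_gt 1 s with h1 | h1
  · rw [Path.extend_of_one_le _ h1, Path.extend_of_le_zero _ (by linarith)]
  rw [Path.extend_apply _ ⟨h0.le, h1.le⟩, Path.extend_apply _ ⟨by linarith, by linarith⟩]
  exact congrArg p (Subtype.ext (by simp [unitInterval.symm]))

theorem evP {Z : Type*} [TopologicalSpace Z] {a c : X} {P : Z → Path a c} (hP : Continuous P) :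
    Continuous fun q : Z × I => (P q.1) q.2 :=
  Path.continuous_uncurry_iff.mpr hP

theorem evR {Z : Type*} [TopologicalSpace Z] {a c : X} {P : Z → Path a c} (hP : Continuous P) :
    Continuous fun q : Z × ℝ => (P q.1).extend q.2 :=
  Path.continuous_uncurry_extend_of_continuous_family P (evP hP)

theorem reflTransEval (a c : X) (p : Path a c) (u : I) :
    ((Path.refl a).trans p) u = p.extend (2 * (u : ℝ) - 1) := by
  rw [← Path.extend_extends' _ u, transExtend]
  split_ifs with h
  · rw [Path.extend_of_le_zero p (by linarith : 2 * (u : ℝ) - 1 ≤ 0)]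
    simp
  · rfl

end PathHelpers

section Geometry

variable {n : ℕ} (b : UnitSphere n)

/-- The equator sphere orthogonal to the basepoint `b`. -/
abbrev Equator : Type :=
  {v : EuclideanSpace ℝ (Fin (n + 1)) // ⟪v, (b : EuclideanSpace ℝ (Fin (n + 1)))⟫_ℝ = 0 ∧ ‖v‖ = 1}

theorem norm_coe_unitSphere (x : UnitSphere n) : ‖(x : EuclideanSpace ℝ (Fin (n + 1)))‖ = 1 :=
  mem_sphere_zero_iff_norm.mp x.2

instance equatorCompact : CompactSpace (Equator b) := by
  have hc : IsCompact {v : EuclideanSpace ℝ (Fin (n + 1)) |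
      ⟪v, (b : EuclideanSpace ℝ (Fin (n + 1)))⟫_ℝ = 0 ∧ ‖v‖ = 1} := by
    apply Metric.isCompact_of_isClosed_isBounded
    · rw [show {v : EuclideanSpace ℝ (Fin (n + 1)) |
          ⟪v, (b : EuclideanSpace ℝ (Fin (n + 1)))⟫_ℝ = 0 ∧ ‖v‖ = 1} =
          {v | ⟪v, (b : EuclideanSpace ℝ (Fin (n + 1)))⟫_ℝ = 0} ∩ {v | ‖v‖ = 1} from rfl]
      exact (isClosed_eq (Continuous.inner continuous_id continuous_const) continuous_const).inter
        (isClosed_eq continuous_norm continuous_const)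
    · apply Metric.isBounded_sphere (x := (0 : EuclideanSpace ℝ (Fin (n + 1)))) (r := 1) |>.subset
      intro v hv
      exact mem_sphere_zero_iff_norm.mpr hv.2
  exact isCompact_iff_compactSpace.mp hc

theorem equator_nonempty (hn : 1 ≤ n) : Nonempty (Equator b) := by
  have hb : (b : EuclideanSpace ℝ (Fin (n + 1))) ≠ 0 := by
    intro h
    have h2 := norm_coe_unitSphere b
    rw [h, norm_zero] at h2
    norm_num at h2
  have hK : (ℝ ∙ (b : EuclideanSpace ℝ (Fin (n + 1))))ᗮ ≠ ⊥ := by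
    intro hbot
    rw [Submodule.orthogonal_eq_bot_iff] at hbot
    have h1 : Module.finrank ℝ (ℝ ∙ (b : EuclideanSpace ℝ (Fin (n + 1)))) = n + 1 := by
      rw [hbot]
      simp [finrank_euclideanSpace_fin]
    rw [finrank_span_singleton hb] at h1
    omega
  obtain ⟨w, hw, hw0⟩ := Submodule.exists_mem_ne_zero_of_ne_bot hK
  refine ⟨⟨‖w‖⁻¹ • w, ?_, norm_smul_inv_norm hw0⟩⟩
  rw [real_inner_smul_left]
  have : ⟪(b : EuclideanSpace ℝ (Fin (n + 1))), w⟫_ℝ = 0 :=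
    (Submodule.mem_orthogonal _ _).mp hw _ (Submodule.mem_span_singleton_self _)
  rw [real_inner_comm] at this
  rw [this, mul_zero]

/-- Latitude-longitude parametrization of the sphere from the equator and the unit interval. -/
noncomputable def sphPt (v : Equator b) (u : I) : UnitSphere n :=
  ⟨(2 * (u : ℝ) - 1) • (b : EuclideanSpace ℝ (Fin (n + 1))) +
      Real.sqrt (1 - (2 * (u : ℝ) - 1) ^ 2) • (v : EuclideanSpace ℝ (Fin (n + 1))), by
    have hu0 : (0 : ℝ) ≤ u := u.2.1
    have hu1 : (u : ℝ) ≤ 1 := u.2.2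
    set A : ℝ := 2 * (u : ℝ) - 1 with hA
    have hA2 : A ^ 2 ≤ 1 := by nlinarith
    have hc2 : Real.sqrt (1 - A ^ 2) ^ 2 = 1 - A ^ 2 := Real.sq_sqrt (by linarith)
    rw [mem_sphere_zero_iff_norm]
    have hnormsq : ‖A • (b : EuclideanSpace ℝ (Fin (n + 1))) +
        Real.sqrt (1 - A ^ 2) • (v : EuclideanSpace ℝ (Fin (n + 1)))‖ ^ 2 = 1 := by
      rw [norm_add_sq_real]
      rw [real_inner_smul_left, real_inner_smul_right]
      have hvb : ⟪(b : EuclideanSpace ℝ (Fin (n + 1))),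
          (v : EuclideanSpace ℝ (Fin (n + 1)))⟫_ℝ = 0 := by
        rw [real_inner_comm]; exact v.2.1
      rw [hvb, norm_smul, norm_smul, Real.norm_eq_abs, Real.norm_eq_abs,
        norm_coe_unitSphere, v.2.2]
      rw [mul_pow, mul_pow, sq_abs, sq_abs, hc2]
      ring
    nlinarith [norm_nonneg (A • (b : EuclideanSpace ℝ (Fin (n + 1))) +
      Real.sqrt (1 - A ^ 2) • (v : EuclideanSpace ℝ (Fin (n + 1))))]⟩

theorem sphPt_continuous : Continuous fun p : Equator b × I => sphPt b p.1 p.2 := by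
  apply Continuous.subtype_mk
  apply Continuous.add
  · exact (((continuous_const.mul (continuous_subtype_val.comp continuous_snd)).sub
      continuous_const)).smul continuous_const
  · apply Continuous.fun_smul
    · apply Real.continuous_sqrt.comp
      apply Continuous.sub continuous_const
      apply Continuous.pow
      exact (continuous_const.mul (continuous_subtype_val.comp continuous_snd)).sub
        continuous_const
    · exact continuous_subtype_val.comp continuous_fst

theorem sphPt_one (v : Equator b) : sphPt b v 1 = b := by
  apply Subtype.ext
  show (2 * ((1 : I) : ℝ) - 1) • _ + Real.sqrt (1 - (2 * ((1 : I) : ℝ) - 1) ^ 2) • _ = _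
  norm_num

theorem sphPt_zero (v v' : Equator b) : sphPt b v 0 = sphPt b v' 0 := by
  apply Subtype.ext
  show (2 * ((0 : I) : ℝ) - 1) • _ + Real.sqrt (1 - (2 * ((0 : I) : ℝ) - 1) ^ 2) • _ =
    (2 * ((0 : I) : ℝ) - 1) • _ + Real.sqrt (1 - (2 * ((0 : I) : ℝ) - 1) ^ 2) • _
  norm_num

theorem sphPt_surjective (hn : 1 ≤ n) :
    Function.Surjective fun p : Equator b × I => sphPt b p.1 p.2 := by
  obtain ⟨v₀⟩ := equator_nonempty b hn
  intro x
  set V := EuclideanSpace ℝ (Fin (n + 1))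
  set a : ℝ := ⟪(x : V), (b : V)⟫_ℝ with ha
  have haabs : |a| ≤ 1 := by
    have := abs_real_inner_le_norm (x : V) (b : V)
    rwa [norm_coe_unitSphere, norm_coe_unitSphere, mul_one] at this
  have ha1 : a ≤ 1 := (abs_le.mp haabs).2
  have ha0 : -1 ≤ a := (abs_le.mp haabs).1
  set u : I := ⟨(1 + a) / 2, by constructor <;> [linarith; linarith]⟩ with hu
  set w : V := (x : V) - a • (b : V) with hw
  have hwb : ⟪w, (b : V)⟫_ℝ = 0 := by
    rw [hw, inner_sub_left, real_inner_smul_left, real_inner_self_eq_norm_sq,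
      norm_coe_unitSphere]
    ring
  have hA : 2 * ((u : ℝ)) - 1 = a := by show 2 * ((1 + a)/2) - 1 = a; ring
  have hxx : ⟪(x : V), (x : V)⟫_ℝ = 1 := by
    rw [real_inner_self_eq_norm_sq, norm_coe_unitSphere]; norm_num
  have hbb2 : ⟪(b : V), (b : V)⟫_ℝ = 1 := by
    rw [real_inner_self_eq_norm_sq, norm_coe_unitSphere]; norm_num
  have hbx : ⟪(b : V), (x : V)⟫_ℝ = a := by rw [real_inner_comm]
  have hnormw : ‖w‖ ^ 2 = 1 - a ^ 2 := by
    have h' : ‖w‖ ^ 2 = ⟪w, w⟫_ℝ := (real_inner_self_eq_norm_sq w).symm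
    rw [h', hw]
    simp only [inner_sub_left, inner_sub_right, real_inner_smul_left, real_inner_smul_right]
    rw [hxx, hbx, hbb2, show ⟪(x : V), (b : V)⟫_ℝ = a from rfl]
    ring
  by_cases hw0 : w = 0
  · -- x is a pole
    have hxab : (x : V) = a • (b : V) := by
      have := hw0
      rw [hw, sub_eq_zero] at this
      exact this
    have : |a| = 1 := by
      have := norm_coe_unitSphere x
      rw [hxab, norm_smul, Real.norm_eq_abs, norm_coe_unitSphere, mul_one] at this
      exact this
    rcases abs_eq (by norm_num : (0:ℝ) ≤ 1) |>.mp this with h1 | h1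
    · refine ⟨(v₀, 1), ?_⟩
      show sphPt b v₀ 1 = x
      rw [sphPt_one]
      apply Subtype.ext
      rw [hxab, h1, one_smul]
    · refine ⟨(v₀, 0), ?_⟩
      show sphPt b v₀ 0 = x
      apply Subtype.ext
      show (2 * ((0 : I) : ℝ) - 1) • _ + Real.sqrt (1 - (2 * ((0 : I) : ℝ) - 1) ^ 2) • _ = _
      rw [hxab, h1]
      norm_num
  · have hnw : ‖w‖ ≠ 0 := fun hc => hw0 (norm_eq_zero.mp hc)
    refine ⟨(⟨‖w‖⁻¹ • w, ?_, norm_smul_inv_norm hw0⟩, u), ?_⟩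
    · rw [real_inner_smul_left, hwb, mul_zero]
    · show sphPt b _ u = x
      apply Subtype.ext
      show (2 * ((u : ℝ)) - 1) • (b : V) +
        Real.sqrt (1 - (2 * ((u : ℝ)) - 1) ^ 2) • (‖w‖⁻¹ • w) = (x : V)
      rw [hA]
      have hsq : Real.sqrt (1 - a ^ 2) = ‖w‖ := by
        rw [← hnormw, Real.sqrt_sq (norm_nonneg w)]
      rw [hsq, smul_smul, mul_inv_cancel₀ hnw, one_smul, hw]
      abel

theorem sphPt_fiber {v v' : Equator b} {u u' : I} (h : sphPt b v u = sphPt b v' u') :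
    u = u' ∧ ((u : ℝ) = 0 ∨ (u : ℝ) = 1 ∨ v = v') := by
  set V := EuclideanSpace ℝ (Fin (n + 1))
  have hvec : (2 * (u : ℝ) - 1) • (b : V) + Real.sqrt (1 - (2 * (u : ℝ) - 1) ^ 2) • (v : V) =
      (2 * (u' : ℝ) - 1) • (b : V) + Real.sqrt (1 - (2 * (u' : ℝ) - 1) ^ 2) • (v' : V) :=
    Subtype.ext_iff.mp h
  have hbb : ⟪(b : V), (b : V)⟫_ℝ = 1 := by
    rw [real_inner_self_eq_norm_sq, norm_coe_unitSphere]; norm_num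
  have hvb : ⟪(v : V), (b : V)⟫_ℝ = 0 := v.2.1
  have hvb' : ⟪(v' : V), (b : V)⟫_ℝ = 0 := v'.2.1
  have hAA : 2 * (u : ℝ) - 1 = 2 * (u' : ℝ) - 1 := by
    have := congrArg (fun z : V => ⟪z, (b : V)⟫_ℝ) hvec
    simpa [inner_add_left, real_inner_smul_left, hbb, hvb, hvb'] using this
  have huu : u = u' := by
    apply Subtype.ext
    linarith
  refine ⟨huu, ?_⟩
  by_cases h0 : (u : ℝ) = 0
  · exact Or.inl h0
  by_cases h1 : (u : ℝ) = 1
  · exact Or.inr (Or.inl h1)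
  refine Or.inr (Or.inr ?_)
  have hu0 : (0 : ℝ) < u := lt_of_le_of_ne u.2.1 (Ne.symm h0)
  have hu1 : (u : ℝ) < 1 := lt_of_le_of_ne u.2.2 h1
  have hcpos : 0 < Real.sqrt (1 - (2 * (u : ℝ) - 1) ^ 2) := by
    apply Real.sqrt_pos.mpr
    nlinarith
  have hsmul : Real.sqrt (1 - (2 * (u : ℝ) - 1) ^ 2) • (v : V) =
      Real.sqrt (1 - (2 * (u : ℝ) - 1) ^ 2) • (v' : V) := by
    have := hvec
    rw [← hAA] at this
    exact add_left_cancel this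
  apply Subtype.ext
  exact smul_right_injective V (ne_of_gt hcpos) hsmul

end Geometry

section Descent

variable {X : Type*} [TopologicalSpace X] {n : ℕ} (b : UnitSphere n)

/-- Descend a map on `Equator b × I` constant on fibers of `sphPt` to the sphere. -/
theorem descend0 (hs : Function.Surjective fun p : Equator b × I => sphPt b p.1 p.2)
    (W : C(Equator b × I, X))
    (hfib : ∀ p q : Equator b × I, sphPt b p.1 p.2 = sphPt b q.1 q.2 → W p = W q) :
    ∃ K : C(UnitSphere n, X), ∀ v u, K (sphPt b v u) = W (v, u) := by
  set q : Equator b × I → UnitSphere n := fun p => sphPt b p.1 p.2 with hq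
  have hqc : Continuous q := sphPt_continuous b
  have hcl : IsClosedMap q := hqc.isClosedMap
  have hquot : Topology.IsQuotientMap q := hcl.isQuotientMap hqc hs
  set K0 : UnitSphere n → X := fun x => W (Function.surjInv hs x) with hK0
  have hcomp : K0 ∘ q = W := by
    funext p
    exact hfib _ _ (Function.surjInv_eq hs (q p))
  have hK0c : Continuous K0 := by
    rw [hquot.continuous_iff, hcomp]
    exact W.continuous
  refine ⟨⟨K0, hK0c⟩, fun v u => ?_⟩
  show K0 (q (v, u)) = W (v, u)
  have := congrFun hcomp (v, u)
  exact this

/-- Descend a homotopy on `I × (Equator b × I)` to the sphere, yielding a rel-basepoint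
homotopy. -/
theorem relOfW (hs : Function.Surjective fun p : Equator b × I => sphPt b p.1 p.2)
    {x₀ : X} (W : C(I × (Equator b × I), X))
    (h0 : ∀ (t : I) (v v' : Equator b), W (t, (v, 0)) = W (t, (v', 0)))
    (hb : ∀ (t : I) (v : Equator b), W (t, (v, 1)) = x₀)
    (F G : C(UnitSphere n, X))
    (hF : ∀ v u, F (sphPt b v u) = W (0, (v, u)))
    (hG : ∀ v u, G (sphPt b v u) = W (1, (v, u))) :
    F.HomotopicRel G {b} := by
  set q : I × (Equator b × I) → I × UnitSphere n :=
    fun p => (p.1, sphPt b p.2.1 p.2.2) with hq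
  have hqc : Continuous q := continuous_fst.prodMk ((sphPt_continuous b).comp continuous_snd)
  have hqs : Function.Surjective q := by
    rintro ⟨t, x⟩
    obtain ⟨⟨v, u⟩, hp⟩ := hs x
    exact ⟨(t, (v, u)), by simp [hq]; exact hp⟩
  have hfib : ∀ p p' : I × (Equator b × I), q p = q p' → W p = W p' := by
    rintro ⟨t, v, u⟩ ⟨t', v', u'⟩ hpe
    have ht : t = t' := (Prod.ext_iff.mp hpe).1
    have hsp : sphPt b v u = sphPt b v' u' := (Prod.ext_iff.mp hpe).2
    obtain ⟨huu, hcase⟩ := sphPt_fiber b hsp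
    subst ht huu
    rcases hcase with h | h | h
    · have hu0 : u = 0 := Subtype.ext h
      subst hu0
      exact h0 t v v'
    · have hu1 : u = 1 := Subtype.ext h
      subst hu1
      rw [hb t v, hb t v']
    · subst h; rfl
  have hquot : Topology.IsQuotientMap q := hqc.isClosedMap.isQuotientMap hqc hqs
  set K0 : I × UnitSphere n → X := fun x => W (Function.surjInv hqs x) with hK0
  have hcomp : K0 ∘ q = W := by
    funext p
    exact hfib _ _ (Function.surjInv_eq hqs (q p))
  have hK0c : Continuous K0 := by
    rw [hquot.continuous_iff, hcomp]
    exact W.continuous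
  have hKeval : ∀ (t : I) (v : Equator b) (u : I), K0 (t, sphPt b v u) = W (t, (v, u)) := by
    intro t v u
    have : (t, sphPt b v u) = q (t, (v, u)) := rfl
    rw [this]
    exact congrFun hcomp (t, (v, u))
  obtain ⟨⟨v₀, u₀⟩, -⟩ := hs b
  have hbp : sphPt b v₀ 1 = b := sphPt_one b v₀
  refine ⟨⟨⟨⟨K0, hK0c⟩, ?_, ?_⟩, ?_⟩⟩
  · intro x
    obtain ⟨⟨v, u⟩, rfl⟩ := hs x
    exact (hKeval 0 v u).trans (hF v u).symm
  · intro x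
    obtain ⟨⟨v, u⟩, rfl⟩ := hs x
    exact (hKeval 1 v u).trans (hG v u).symm
  · intro t x hx
    rcases hx with rfl
    show K0 (t, x) = F x
    rw [← hbp, hKeval t v₀ 1, hb t v₀, hF v₀ 1, hb 0 v₀]

variable {b}

/-- Reparametrization step: two reparametrizations of a common family of paths give
rel-basepoint homotopic maps of the sphere. -/
theorem gen_step (hs : Function.Surjective fun p : Equator b × I => sphPt b p.1 p.2)
    {x₀ a : X} (r : Equator b → Path a x₀) (hr : Continuous r)
    (ψ₀ ψ₁ : I → ℝ) (hψ₀ : Continuous ψ₀) (hψ₁ : Continuous ψ₁)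
    (hb₀ : ψ₀ 1 = 1) (hb₁ : ψ₁ 1 = 1)
    (hlow : ∀ (v v' : Equator b) (s : ℝ), s ≤ max (ψ₀ 0) (ψ₁ 0) →
      (r v).extend s = (r v').extend s)
    (F G : C(UnitSphere n, X))
    (hF : ∀ v u, F (sphPt b v u) = (r v).extend (ψ₀ u))
    (hG : ∀ v u, G (sphPt b v u) = (r v).extend (ψ₁ u)) :
    F.HomotopicRel G {b} := by
  set W : C(I × (Equator b × I), X) :=
    ⟨fun p => (r p.2.1).extend ((1 - (p.1 : ℝ)) * ψ₀ p.2.2 + (p.1 : ℝ) * ψ₁ p.2.2), by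
      apply Continuous.comp (evR hr) (f := fun p : I × (Equator b × I) =>
        (p.2.1, (1 - (p.1 : ℝ)) * ψ₀ p.2.2 + (p.1 : ℝ) * ψ₁ p.2.2))
      apply Continuous.prodMk (continuous_fst.comp continuous_snd)
      apply Continuous.add
      · exact (continuous_const.sub (continuous_subtype_val.comp continuous_fst)).mul
          (hψ₀.comp (continuous_snd.comp continuous_snd))
      · exact (continuous_subtype_val.comp continuous_fst).mul
          (hψ₁.comp (continuous_snd.comp continuous_snd))⟩ with hW
  apply relOfW b hs W
  · intro t v v'
    have ht0 : (0 : ℝ) ≤ t := t.2.1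
    have ht1 : (t : ℝ) ≤ 1 := t.2.2
    apply hlow
    have h₀ : ψ₀ 0 ≤ max (ψ₀ 0) (ψ₁ 0) := le_max_left _ _
    have h₁ : ψ₁ 0 ≤ max (ψ₀ 0) (ψ₁ 0) := le_max_right _ _
    nlinarith
  · intro t v
    show (r v).extend ((1 - (t : ℝ)) * ψ₀ 1 + (t : ℝ) * ψ₁ 1) = x₀
    rw [hb₀, hb₁, show (1 - (t : ℝ)) * 1 + (t : ℝ) * 1 = 1 by ring, Path.extend_one]
  · intro v u
    show F (sphPt b v u) = (r v).extend ((1 - ((0 : I) : ℝ)) * ψ₀ u + ((0 : I) : ℝ) * ψ₁ u)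
    rw [hF v u]
    norm_num
  · intro v u
    show G (sphPt b v u) = (r v).extend ((1 - ((1 : I) : ℝ)) * ψ₀ u + ((1 : I) : ℝ) * ψ₁ u)
    rw [hG v u]
    norm_num

/-- Sliding a constant prefix out through the free pole. -/
theorem slide_step (hs : Function.Surjective fun p : Equator b × I => sphPt b p.1 p.2)
    {x₀ a a' : X} (δ : Path a' a) (P : Equator b → Path a x₀) (hP : Continuous P)
    (F G : C(UnitSphere n, X))
    (hF : ∀ v u, F (sphPt b v u) = (δ.trans (P v)) u)
    (hG : ∀ v u, G (sphPt b v u) = ((Path.refl a).trans (P v)) u) :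
    F.HomotopicRel G {b} := by
  set W : C(I × (Equator b × I), X) :=
    ⟨fun p => if ((p.2.2 : ℝ)) ≤ 1 / 2 then
        δ.extend ((1 - (p.1 : ℝ)) * (2 * (p.2.2 : ℝ)) + (p.1 : ℝ))
      else (P p.2.1).extend (2 * (p.2.2 : ℝ) - 1), by
      apply Continuous.if_le
      · apply δ.continuous_extend.comp
        exact ((continuous_const.sub (continuous_subtype_val.comp continuous_fst)).mul
          (continuous_const.mul
            (continuous_subtype_val.comp (continuous_snd.comp continuous_snd)))).add
          (continuous_subtype_val.comp continuous_fst)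
      · apply Continuous.comp (evR hP) (f := fun p : I × (Equator b × I) =>
          (p.2.1, 2 * ((p.2.2 : I) : ℝ) - 1))
        exact (continuous_fst.comp continuous_snd).prodMk
          ((continuous_const.mul
            (continuous_subtype_val.comp (continuous_snd.comp continuous_snd))).sub
            continuous_const)
      · exact continuous_subtype_val.comp (continuous_snd.comp continuous_snd)
      · exact continuous_const
      · intro p hp
        rw [hp]
        have h1 : (1 - (p.1 : ℝ)) * (2 * (1 / 2 : ℝ)) + (p.1 : ℝ) = 1 := by ring
        rw [h1, Path.extend_one]
        have h2 : 2 * (1 / 2 : ℝ) - 1 = 0 := by ring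
        rw [h2, Path.extend_zero]⟩ with hW
  apply relOfW b hs W
  · intro t v v'
    show (if (((0 : I) : ℝ)) ≤ 1 / 2 then _ else _) = (if (((0 : I) : ℝ)) ≤ 1 / 2 then _ else _)
    norm_num
  · intro t v
    show (if (((1 : I) : ℝ)) ≤ 1 / 2 then _ else _) = x₀
    rw [if_neg (by norm_num)]
    show (P v).extend (2 * ((1 : I) : ℝ) - 1) = x₀
    norm_num
  · intro v u
    rw [hF v u, ← Path.extend_extends' _ u, transExtend]
    show _ = if ((u : ℝ)) ≤ 1 / 2 then
      δ.extend ((1 - ((0 : I) : ℝ)) * (2 * (u : ℝ)) + ((0 : I) : ℝ)) else _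
    norm_num
  · intro v u
    rw [hG v u, ← Path.extend_extends' _ u, transExtend]
    show _ = if ((u : ℝ)) ≤ 1 / 2 then
      δ.extend ((1 - ((1 : I) : ℝ)) * (2 * (u : ℝ)) + ((1 : I) : ℝ)) else _
    split_ifs with h
    · rw [show (1 - ((1 : I) : ℝ)) * (2 * (u : ℝ)) + ((1 : I) : ℝ) = 1 by norm_num,
        Path.extend_one, Path.refl_extend, ContinuousMap.const_apply]
    · rfl

end Descent

section Steps

variable {X : Type*} [TopologicalSpace X] {n : ℕ} {b : UnitSphere n}

/-- The homotopy-commutativity step: swap the middle loop with `γ` inside the family. -/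
theorem hc_step (hs : Function.Surjective fun p : Equator b × I => sphPt b p.1 p.2)
    {x₀ y : X} (Gh : (loopConcat x₀).Homotopy (loopConcatSwap x₀))
    (p : Path y x₀) (e : Equator b → Path x₀ x₀) (he : Continuous e) (γ : Path x₀ x₀)
    (F G : C(UnitSphere n, X))
    (hF : ∀ v u, F (sphPt b v u) = (p.trans ((e v).trans γ)) u)
    (hG : ∀ v u, G (sphPt b v u) = (p.trans (γ.trans (e v))) u) :
    F.HomotopicRel G {b} := by
  have hQ : Continuous fun q : I × Equator b => p.trans (Gh (q.1, (e q.2, γ))) := by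
    apply Continuous.path_trans continuous_const
    exact Gh.continuous.comp
      (continuous_fst.prodMk ((he.comp continuous_snd).prodMk continuous_const))
  set W : C(I × (Equator b × I), X) :=
    ⟨fun q => (p.trans (Gh (q.1, (e q.2.1, γ)))) q.2.2, by
      apply Continuous.comp (evP hQ) (f := fun q : I × (Equator b × I) =>
        ((q.1, q.2.1), q.2.2))
      exact (continuous_fst.prodMk (continuous_fst.comp continuous_snd)).prodMk
        (continuous_snd.comp continuous_snd)⟩ with hW
  apply relOfW b hs W
  · intro t v v'
    show (p.trans _) (0 : I) = (p.trans _) (0 : I)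
    rw [Path.source, Path.source]
  · intro t v
    show (p.trans _) (1 : I) = x₀
    rw [Path.target]
  · intro v u
    rw [hF v u]
    show _ = (p.trans (Gh (0, (e v, γ)))) u
    rw [Gh.apply_zero (e v, γ)]
    rfl
  · intro v u
    rw [hG v u]
    show _ = (p.trans (Gh (1, (e v, γ)))) u
    rw [Gh.apply_one (e v, γ)]
    rfl

/-- The free homotopy `H` from `f` to `g` turns the `γ`-action on `f` into a map
homotopic rel basepoint to `g`. -/
theorem action_step (hs : Function.Surjective fun p : Equator b × I => sphPt b p.1 p.2)
    {x₀ y : X} (f g : C(UnitSphere n, X)) (H : f.Homotopy g) (hgb : g b = x₀)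
    (γ : Path x₀ x₀) (hγ : ∀ s : I, γ s = H (s, b))
    (m : Equator b → Path y x₀) (hm : ∀ v u, (m v) u = f (sphPt b v u))
    (F : C(UnitSphere n, X))
    (hF : ∀ v u, F (sphPt b v u) = ((m v).trans γ) u) :
    F.HomotopicRel g {b} := by
  have hτ : ∀ t u : I, min 1 ((t : ℝ) + max 0 (2 * (u : ℝ) - 1)) ∈ I := by
    intro t u
    constructor
    · apply le_min (by norm_num)
      have := t.2.1
      have := le_max_left (0:ℝ) (2 * (u : ℝ) - 1)
      linarith
    · exact min_le_left _ _
  have hlam : ∀ t u : I, min (2 * (u : ℝ) / (1 + (t : ℝ))) 1 ∈ I := by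
    intro t u
    constructor
    · apply le_min _ (by norm_num)
      have h1 := u.2.1
      have h2 := t.2.1
      positivity
    · exact min_le_right _ _
  set W : C(I × (Equator b × I), X) :=
    ⟨fun q => H (⟨min 1 ((q.1 : ℝ) + max 0 (2 * (q.2.2 : ℝ) - 1)), hτ q.1 q.2.2⟩,
        sphPt b q.2.1 ⟨min (2 * (q.2.2 : ℝ) / (1 + (q.1 : ℝ))) 1, hlam q.1 q.2.2⟩), by
      apply H.continuous.comp
      apply Continuous.prodMk
      · apply Continuous.subtype_mk
        apply Continuous.min continuous_const
        exact (continuous_subtype_val.comp continuous_fst).add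
          (continuous_const.max ((continuous_const.mul (continuous_subtype_val.comp
            (continuous_snd.comp continuous_snd))).sub continuous_const))
      · apply Continuous.comp (sphPt_continuous b) (f := fun q : I × (Equator b × I) =>
          (q.2.1, (⟨min (2 * (q.2.2 : ℝ) / (1 + (q.1 : ℝ))) 1, hlam q.1 q.2.2⟩ : I)))
        apply Continuous.prodMk (continuous_fst.comp continuous_snd)
        apply Continuous.subtype_mk
        apply Continuous.min _ continuous_const
        apply Continuous.div
        · exact continuous_const.mul (continuous_subtype_val.comp
            (continuous_snd.comp continuous_snd))
        · exact continuous_const.add (continuous_subtype_val.comp continuous_fst)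
        · intro x
          have := x.1.2.1
          intro hc
          linarith⟩ with hW
  apply relOfW b hs W
  · intro t v v'
    simp only [hW, ContinuousMap.coe_mk]
    have h0 : (⟨min (2 * ((0:I) : ℝ) / (1 + (t : ℝ))) 1, hlam t 0⟩ : I) = (0 : I) := by
      apply Subtype.ext
      show min (2 * ((0:I) : ℝ) / (1 + (t : ℝ))) 1 = 0
      norm_num
    rw [h0, sphPt_zero b v v']
  · intro t v
    simp only [hW, ContinuousMap.coe_mk]
    have ht1 : (t : ℝ) ≤ 1 := t.2.2
    have ht0 : (0 : ℝ) ≤ t := t.2.1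
    have hτ1 : (⟨min 1 ((t : ℝ) + max 0 (2 * ((1:I) : ℝ) - 1)), hτ t 1⟩ : I) = (1 : I) := by
      apply Subtype.ext
      show min 1 ((t : ℝ) + max 0 (2 * ((1:I) : ℝ) - 1)) = 1
      rw [show (2 * ((1:I) : ℝ) - 1) = 1 by norm_num]
      rw [max_eq_right (by norm_num : (0:ℝ) ≤ 1)]
      exact min_eq_left (by linarith)
    have hlam1 : (⟨min (2 * ((1:I) : ℝ) / (1 + (t : ℝ))) 1, hlam t 1⟩ : I) = (1 : I) := by
      apply Subtype.ext
      show min (2 * ((1:I) : ℝ) / (1 + (t : ℝ))) 1 = 1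
      apply min_eq_right
      rw [le_div_iff₀ (by linarith : (0:ℝ) < 1 + (t : ℝ))]
      norm_num
      linarith
    rw [hτ1, hlam1, sphPt_one, H.apply_one, hgb]
  · intro v u
    simp only [hW, ContinuousMap.coe_mk]
    rw [hF v u, ← Path.extend_extends' _ u, transExtend]
    have hu0 : (0 : ℝ) ≤ u := u.2.1
    have hu1 : (u : ℝ) ≤ 1 := u.2.2
    split_ifs with h
    · have hτ0 : (⟨min 1 (((0:I) : ℝ) + max 0 (2 * (u : ℝ) - 1)), hτ 0 u⟩ : I) = (0 : I) := by
        apply Subtype.ext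
        show min 1 (((0:I) : ℝ) + max 0 (2 * (u : ℝ) - 1)) = 0
        rw [show ((0:I) : ℝ) = 0 by norm_num, zero_add,
          max_eq_left (by linarith : 2 * (u : ℝ) - 1 ≤ 0)]
        norm_num
      have hlam0 : (⟨min (2 * (u : ℝ) / (1 + ((0:I) : ℝ))) 1, hlam 0 u⟩ : I) =
          (⟨2 * (u : ℝ), by constructor <;> [positivity; linarith]⟩ : I) := by
        apply Subtype.ext
        show min (2 * (u : ℝ) / (1 + ((0:I) : ℝ))) 1 = 2 * (u : ℝ)
        rw [show (1 + ((0:I) : ℝ)) = 1 by norm_num, div_one]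
        exact min_eq_left (by linarith)
      rw [hτ0, hlam0, H.apply_zero]
      rw [Path.extend_apply _ ⟨by positivity, by linarith⟩]
      exact hm v _
    · push_neg at h
      have hτ0 : (⟨min 1 (((0:I) : ℝ) + max 0 (2 * (u : ℝ) - 1)), hτ 0 u⟩ : I) =
          (⟨2 * (u : ℝ) - 1, by constructor <;> linarith⟩ : I) := by
        apply Subtype.ext
        show min 1 (((0:I) : ℝ) + max 0 (2 * (u : ℝ) - 1)) = 2 * (u : ℝ) - 1
        rw [show ((0:I) : ℝ) = 0 by norm_num, zero_add,
          max_eq_right (by linarith : (0:ℝ) ≤ 2 * (u : ℝ) - 1)]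
        exact min_eq_right (by linarith)
      have hlam0 : (⟨min (2 * (u : ℝ) / (1 + ((0:I) : ℝ))) 1, hlam 0 u⟩ : I) = (1 : I) := by
        apply Subtype.ext
        show min (2 * (u : ℝ) / (1 + ((0:I) : ℝ))) 1 = 1
        rw [show (1 + ((0:I) : ℝ)) = 1 by norm_num, div_one]
        exact min_eq_right (by linarith)
      rw [hτ0, hlam0, sphPt_one]
      rw [Path.extend_apply _ ⟨by linarith, by linarith⟩]
      exact hγ _
  · intro v u
    simp only [hW, ContinuousMap.coe_mk]
    have hu0 : (0 : ℝ) ≤ u := u.2.1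
    have hu1 : (u : ℝ) ≤ 1 := u.2.2
    have hτ1 : (⟨min 1 (((1:I) : ℝ) + max 0 (2 * (u : ℝ) - 1)), hτ 1 u⟩ : I) = (1 : I) := by
      apply Subtype.ext
      show min 1 (((1:I) : ℝ) + max 0 (2 * (u : ℝ) - 1)) = 1
      have := le_max_left (0:ℝ) (2 * (u : ℝ) - 1)
      rw [show ((1:I) : ℝ) = 1 by norm_num]
      exact min_eq_left (by linarith)
    have hlamu : (⟨min (2 * (u : ℝ) / (1 + ((1:I) : ℝ))) 1, hlam 1 u⟩ : I) = u := by
      apply Subtype.ext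
      show min (2 * (u : ℝ) / (1 + ((1:I) : ℝ))) 1 = (u : ℝ)
      rw [show (1 + ((1:I) : ℝ)) = 2 by norm_num]
      rw [show 2 * (u : ℝ) / 2 = (u : ℝ) by ring]
      exact min_eq_left hu1
    rw [hτ1, hlamu, H.apply_one]

end Steps

/-- If the loop space of `X` at `x₀` is homotopy commutative — the two continuous
concatenation maps `(α, β) ↦ α ⬝ β` and `(α, β) ↦ β ⬝ α` are homotopic — then any two freely
homotopic based maps `f, g : Sⁿ → X` (with `f b = g b = x₀`, `n ≥ 1`) are homotopic rel the
basepoint `b`. -/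
theorem homotopicRel_of_homotopic_of_homotopyComm {X : Type*} [TopologicalSpace X] (x₀ : X)
    (hcomm : (loopConcat x₀).Homotopic (loopConcatSwap x₀))
    (n : ℕ) (hn : 1 ≤ n) (b : UnitSphere n) (f g : C(UnitSphere n, X))
    (hf : f b = x₀) (hg : g b = x₀) (h : f.Homotopic g) : f.HomotopicRel g {b} := by
  obtain ⟨H⟩ := h
  obtain ⟨Gh⟩ := hcomm
  have hs := sphPt_surjective b hn
  -- the trace loop of the free homotopy at the basepoint
  set γ : Path x₀ x₀ :=
    { toFun := fun s => H (s, b)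
      continuous_toFun := H.continuous.comp (continuous_id.prodMk continuous_const)
      source' := (H.apply_zero b).trans hf
      target' := (H.apply_one b).trans hg } with hγdef
  obtain ⟨v₀⟩ := equator_nonempty b hn
  set y : X := f (sphPt b v₀ 0) with hydef
  -- the family of meridian paths of f
  set m : Equator b → Path y x₀ := fun v =>
    { toFun := fun u => f (sphPt b v u)
      continuous_toFun := f.continuous.comp ((sphPt_continuous b).comp
        (continuous_const.prodMk continuous_id))
      source' := by show f (sphPt b v 0) = y; rw [sphPt_zero b v v₀]
      target' := by show f (sphPt b v 1) = x₀; rw [sphPt_one]; exact hf } with hmdef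
  have hm : Continuous m := by
    apply Path.continuous_uncurry_iff.mp
    show Continuous fun p : Equator b × I => f (sphPt b p.1 p.2)
    exact f.continuous.comp (sphPt_continuous b)
  set mb : Path y x₀ := m v₀ with hmbdef
  set e : Equator b → Path x₀ x₀ := fun v => mb.symm.trans (m v) with hedef
  have he : Continuous e := Continuous.path_trans continuous_const hm
  -- generic construction of sphere maps from path families
  have pm : ∀ (a : X) (P : Equator b → Path a x₀), Continuous P →
      ∃ K : C(UnitSphere n, X), ∀ v u, K (sphPt b v u) = (P v) u := by
    intro a P hP
    apply descend0 b hs ⟨fun p => (P p.1) p.2, evP hP⟩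
    rintro ⟨v, u⟩ ⟨v', u'⟩ hsp
    obtain ⟨huu, hc⟩ := sphPt_fiber b hsp
    subst huu
    rcases hc with h' | h' | h'
    · have hu : u = 0 := Subtype.ext h'
      subst hu
      show (P v) 0 = (P v') 0
      rw [Path.source, Path.source]
    · have hu : u = 1 := Subtype.ext h'
      subst hu
      show (P v) 1 = (P v') 1
      rw [Path.target, Path.target]
    · subst h'; rfl
  obtain ⟨K1, hK1⟩ := pm y (fun v => mb.trans (e v)) (Continuous.path_trans continuous_const he)
  obtain ⟨K2, hK2⟩ := pm x₀ (fun v => (Path.refl x₀).trans (e v))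
    (Continuous.path_trans continuous_const he)
  obtain ⟨K3, hK3⟩ := pm x₀ e he
  obtain ⟨K4, hK4⟩ := pm y (fun v => (m v).trans γ) (Continuous.path_trans hm continuous_const)
  obtain ⟨K5, hK5⟩ := pm y (fun v => mb.trans ((e v).trans γ))
    (Continuous.path_trans continuous_const (Continuous.path_trans he continuous_const))
  obtain ⟨K6, hK6⟩ := pm y (fun v => mb.trans (γ.trans (e v)))
    (Continuous.path_trans continuous_const (Continuous.path_trans continuous_const he))
  obtain ⟨K7, hK7⟩ := pm x₀ (fun v => (Path.refl x₀).trans (γ.trans (e v)))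
    (Continuous.path_trans continuous_const (Continuous.path_trans continuous_const he))
  obtain ⟨K8, hK8⟩ := pm x₀ (fun v => γ.trans (e v))
    (Continuous.path_trans continuous_const he)
  -- Step 1 : f ≃ K1, expanding meridians as mb ⬝ (mb⁻¹ ⬝ m v)
  have hstep1 : f.HomotopicRel K1 {b} := by
    apply gen_step hs (fun v => mb.trans (e v)) (Continuous.path_trans continuous_const he)
      (fun u => (3 + (u : ℝ)) / 4) (fun u => (u : ℝ))
      (by fun_prop) continuous_subtype_val (by norm_num) (by norm_num)
    · -- hlow
      intro v v' s hsle
      have hs34 : s ≤ 3 / 4 := by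
        norm_num at hsle
        exact hsle
      show (mb.trans (e v)).extend s = (mb.trans (e v')).extend s
      conv_lhs => rw [transExtend]
      conv_rhs => rw [transExtend]
      split_ifs with h'
      · rfl
      · show (mb.symm.trans (m v)).extend (2 * s - 1) = (mb.symm.trans (m v')).extend (2 * s - 1)
        conv_lhs => rw [transExtend]
        conv_rhs => rw [transExtend]
        rw [if_pos (by linarith : 2 * s - 1 ≤ 1/2), if_pos (by linarith : 2 * s - 1 ≤ 1/2)]
    · -- hF : junction computation J1
      intro v u
      have hu0 : (0 : ℝ) ≤ u := u.2.1
      have hu1 : (u : ℝ) ≤ 1 := u.2.2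
      show f (sphPt b v u) = (mb.trans (e v)).extend ((3 + (u : ℝ)) / 4)
      rw [transExtend, if_neg (by push_neg; linarith)]
      rw [show 2 * ((3 + (u : ℝ)) / 4) - 1 = ((u : ℝ) + 1) / 2 by ring]
      show f (sphPt b v u) = (mb.symm.trans (m v)).extend (((u : ℝ) + 1) / 2)
      rw [transExtend]
      split_ifs with h'
      · have hu : (u : ℝ) = 0 := by linarith
        have huI : u = 0 := Subtype.ext hu
        rw [show 2 * (((u : ℝ) + 1) / 2) = 1 by rw [hu]; norm_num]
        rw [Path.extend_of_one_le _ le_rfl, huI]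
        show f (sphPt b v 0) = y
        rw [sphPt_zero b v v₀]
      · rw [show 2 * (((u : ℝ) + 1) / 2) - 1 = (u : ℝ) by ring]
        rw [Path.extend_apply _ ⟨hu0, hu1⟩]
        rfl
    · -- hG
      intro v u
      show K1 (sphPt b v u) = (mb.trans (e v)).extend ((u : ℝ))
      rw [hK1 v u, ← Path.extend_extends' _ u]
  -- Step 2 : K1 ≃ K2, slide mb out through the free pole
  have hstep2 : K1.HomotopicRel K2 {b} := slide_step hs mb e he K1 K2 hK1 hK2
  -- Step 3 : K2 ≃ K3, removing the constant prefix
  have hstep3 : K2.HomotopicRel K3 {b} := by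
    apply gen_step hs e he (fun u => 2 * (u : ℝ) - 1) (fun u => (u : ℝ))
      (by fun_prop) continuous_subtype_val (by norm_num) (by norm_num)
    · intro v v' s hsle
      have hs0 : s ≤ 0 := by
        norm_num at hsle
        exact hsle
      show (e v).extend s = (e v').extend s
      rw [Path.extend_of_le_zero _ hs0, Path.extend_of_le_zero _ hs0]
    · intro v u
      show K2 (sphPt b v u) = (e v).extend (2 * (u : ℝ) - 1)
      rw [hK2 v u]
      exact reflTransEval _ _ _ _
    · intro v u
      show K3 (sphPt b v u) = (e v).extend ((u : ℝ))
      rw [hK3 v u, ← Path.extend_extends' _ u]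
  -- Step 4 : K4 ≃ g, via the free homotopy H
  have hstep4 : K4.HomotopicRel g {b} :=
    action_step hs f g H hg γ (fun s => rfl) m (fun v u => rfl) K4 hK4
  -- Step 5 : K4 ≃ K5, junction computation J0
  have hstep5 : K4.HomotopicRel K5 {b} := by
    apply gen_step hs (fun v => mb.trans ((e v).trans γ))
      (Continuous.path_trans continuous_const (Continuous.path_trans he continuous_const))
      (fun u => max ((2 * (u : ℝ) + 5) / 8) (((u : ℝ) + 1) / 2)) (fun u => (u : ℝ))
      (by fun_prop) continuous_subtype_val
      (by
        show max ((2 * ((1:I) : ℝ) + 5) / 8) ((((1:I) : ℝ) + 1) / 2) = 1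
        rw [show ((1:I) : ℝ) = 1 from by norm_num]
        rw [max_eq_right (by norm_num : ((2:ℝ) * 1 + 5) / 8 ≤ (1 + 1) / 2)]
        norm_num) (by norm_num)
    · -- hlow (JlowR)
      intro v v' s hsle
      have hs58 : s ≤ 5 / 8 := by
        norm_num at hsle
        exact hsle
      show (mb.trans ((e v).trans γ)).extend s = (mb.trans ((e v').trans γ)).extend s
      conv_lhs => rw [transExtend]
      conv_rhs => rw [transExtend]
      split_ifs with h'
      · rfl
      · show ((e v).trans γ).extend (2 * s - 1) = ((e v').trans γ).extend (2 * s - 1)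
        conv_lhs => rw [transExtend]
        conv_rhs => rw [transExtend]
        rw [if_pos (by linarith : 2 * s - 1 ≤ 1/2), if_pos (by linarith : 2 * s - 1 ≤ 1/2)]
        show (mb.symm.trans (m v)).extend (2 * (2 * s - 1)) =
          (mb.symm.trans (m v')).extend (2 * (2 * s - 1))
        conv_lhs => rw [transExtend]
        conv_rhs => rw [transExtend]
        rw [if_pos (by linarith : 2 * (2 * s - 1) ≤ 1/2),
          if_pos (by linarith : 2 * (2 * s - 1) ≤ 1/2)]
    · -- hF : junction computation J0
      intro v u
      have hu0 : (0 : ℝ) ≤ u := u.2.1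
      have hu1 : (u : ℝ) ≤ 1 := u.2.2
      show K4 (sphPt b v u) =
        (mb.trans ((e v).trans γ)).extend (max ((2 * (u : ℝ) + 5) / 8) (((u : ℝ) + 1) / 2))
      rw [hK4 v u, ← Path.extend_extends' _ u, transExtend]
      split_ifs with h'
      · -- u ≤ 1/2
        have hmax : max ((2 * (u : ℝ) + 5) / 8) (((u : ℝ) + 1) / 2) = (2 * (u : ℝ) + 5) / 8 :=
          max_eq_left (by linarith)
        rw [hmax, transExtend, if_neg (by push_neg; linarith)]
        rw [show 2 * ((2 * (u : ℝ) + 5) / 8) - 1 = (2 * (u : ℝ) + 1) / 4 by ring]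
        rw [transExtend, if_pos (by linarith : (2 * (u : ℝ) + 1) / 4 ≤ 1/2)]
        rw [show 2 * ((2 * (u : ℝ) + 1) / 4) = (2 * (u : ℝ) + 1) / 2 by ring]
        show (m v).extend (2 * (u : ℝ)) = (mb.symm.trans (m v)).extend ((2 * (u : ℝ) + 1) / 2)
        rw [transExtend]
        split_ifs with h''
        · have hu : (u : ℝ) = 0 := by linarith
          rw [show 2 * ((2 * (u : ℝ) + 1) / 2) = 1 by rw [hu]; norm_num]
          rw [Path.extend_of_one_le _ le_rfl]
          rw [show 2 * (u : ℝ) = 0 by rw [hu]; ring, Path.extend_zero]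
        · rw [show 2 * ((2 * (u : ℝ) + 1) / 2) - 1 = 2 * (u : ℝ) by ring]
      · -- u > 1/2
        push_neg at h'
        have hmax : max ((2 * (u : ℝ) + 5) / 8) (((u : ℝ) + 1) / 2) = ((u : ℝ) + 1) / 2 :=
          max_eq_right (by linarith)
        rw [hmax, transExtend, if_neg (by push_neg; linarith)]
        rw [show 2 * (((u : ℝ) + 1) / 2) - 1 = (u : ℝ) by ring]
        rw [transExtend, if_neg (by push_neg; linarith)]
    · -- hG
      intro v u
      show K5 (sphPt b v u) = (mb.trans ((e v).trans γ)).extend ((u : ℝ))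
      rw [hK5 v u, ← Path.extend_extends' _ u]
  -- Step 6 : K5 ≃ K6, the homotopy-commutativity step
  have hstep6 : K5.HomotopicRel K6 {b} := hc_step hs Gh mb e he γ K5 K6 hK5 hK6
  -- Step 7 : K6 ≃ K7, slide mb out
  have hstep7 : K6.HomotopicRel K7 {b} := slide_step hs mb (fun v => γ.trans (e v))
    (Continuous.path_trans continuous_const he) K6 K7 hK6 hK7
  -- Step 8 : K7 ≃ K8, removing the constant prefix
  have hstep8 : K7.HomotopicRel K8 {b} := by
    apply gen_step hs (fun v => γ.trans (e v)) (Continuous.path_trans continuous_const he)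
      (fun u => 2 * (u : ℝ) - 1) (fun u => (u : ℝ))
      (by fun_prop) continuous_subtype_val (by norm_num) (by norm_num)
    · intro v v' s hsle
      have hs0 : s ≤ 0 := by
        norm_num at hsle
        exact hsle
      show (γ.trans (e v)).extend s = (γ.trans (e v')).extend s
      rw [Path.extend_of_le_zero _ hs0, Path.extend_of_le_zero _ hs0]
    · intro v u
      show K7 (sphPt b v u) = (γ.trans (e v)).extend (2 * (u : ℝ) - 1)
      rw [hK7 v u]
      exact reflTransEval _ _ _ _
    · intro v u
      show K8 (sphPt b v u) = (γ.trans (e v)).extend ((u : ℝ))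
      rw [hK8 v u, ← Path.extend_extends' _ u]
  -- Step 9 : K8 ≃ K2, slide γ out
  have hstep9 : K8.HomotopicRel K2 {b} := slide_step hs γ e he K8 K2 hK8 hK2
  exact (hstep1.trans (hstep2.trans hstep3)).trans
    ((hstep4.symm.trans (hstep5.trans (hstep6.trans (hstep7.trans
      (hstep8.trans (hstep9.trans hstep3)))))).symm)
end
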